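/- arXiv:1110.6261 — 8 statements merged into one kernel-verified Lean document; each statement's English description precedes it below -/
import Mathlib

section
/- Let A be an m-order n-dimensional essentially nonnegative tensor. Assume that for every nonnegative tensor B, the spectral radius ρ(B) is an eigenvalue of B with a nonzero nonnegative eigenvector. Then A has a real eigenvalue λ(A) with a nonzero nonnegative eigenvector such that λ(A) ≥ Re(λ) for every complex eigenvalue λ of A; moreover λ(A) = ρ(αI + A) − α for any α > 0 such that αI + A is nonnegative. -/
open Finset

/-- An `(m+1)`-order, `n`-dimensional real tensor. -/
abbrev Tensor (m n : ℕ) := (Fin (m + 1) → Fin n) → ℝ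

/-- `(A x^{m-1})_i` over ℂ. -/
noncomputable def tApplyC {m n : ℕ} (T : Tensor m n) (x : Fin n → ℂ) (i : Fin n) : ℂ :=
  ∑ j : Fin m → Fin n, (T (Fin.cons i j) : ℂ) * ∏ k, x (j k)

/-- `(A x^{m-1})_i` over ℝ. -/
noncomputable def tApply {m n : ℕ} (T : Tensor m n) (x : Fin n → ℝ) (i : Fin n) : ℝ :=
  ∑ j : Fin m → Fin n, T (Fin.cons i j) * ∏ k, x (j k)

/-- eigenvalue of a tensor -/
def IsEig {m n : ℕ} (T : Tensor m n) (lam : ℂ) : Prop :=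
  ∃ x : Fin n → ℂ, x ≠ 0 ∧ ∀ i, tApplyC T x i = lam * (x i) ^ m

/-- spectral radius -/
noncomputable def specRad {m n : ℕ} (T : Tensor m n) : ℝ :=
  sSup {r : ℝ | ∃ lam : ℂ, IsEig T lam ∧ ‖lam‖ = r}

/-- the unit tensor -/
def unitT (m n : ℕ) : Tensor m n := fun idx => if ∀ k, idx k = idx 0 then 1 else 0

def TNonneg {m n : ℕ} (T : Tensor m n) : Prop := ∀ idx, 0 ≤ T idx

def TEssNonneg {m n : ℕ} (T : Tensor m n) : Prop :=
  ∀ idx, (¬ ∀ k, idx k = idx 0) → 0 ≤ T idx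

def TDiagonal {m n : ℕ} (T : Tensor m n) : Prop :=
  ∀ idx, (¬ ∀ k, idx k = idx 0) → T idx = 0

def TReducible {m n : ℕ} (T : Tensor m n) : Prop :=
  ∃ S : Finset (Fin n), S.Nonempty ∧ S ≠ Finset.univ ∧
    ∀ i ∈ S, ∀ j : Fin m → Fin n, (∀ k, j k ∉ S) → T (Fin.cons i j) = 0

def TIrreducible {m n : ℕ} (T : Tensor m n) : Prop := ¬ TReducible T

def TSymmetric {m n : ℕ} (T : Tensor m n) : Prop :=
  ∀ (σ : Equiv.Perm (Fin (m + 1))) (idx : Fin (m + 1) → Fin n), T (idx ∘ σ) = T idx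

/-- shift making a tensor nonnegative -/
noncomputable def shiftAlpha {m n : ℕ} (T : Tensor m n) : ℝ :=
  (∑ i : Fin n, |T (fun _ => i)|) + 1

/-- dominant eigenvalue of an essentially nonnegative tensor -/
noncomputable def domEig {m n : ℕ} (T : Tensor m n) : ℝ :=
  specRad (fun idx => T idx + shiftAlpha T * unitT m n idx) - shiftAlpha T

/-- homogeneous form `T x^m` -/
noncomputable def tForm {m n : ℕ} (T : Tensor m n) (x : Fin n → ℝ) : ℝ :=
  ∑ idx : Fin (m + 1) → Fin n, T idx * ∏ k, x (idx k)

lemma cons_all_eq_iff {m n : ℕ} (i : Fin n) (j : Fin m → Fin n) :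
    (∀ k, Fin.cons (α := fun _ => Fin n) i j k = Fin.cons (α := fun _ => Fin n) i j 0) ↔ j = fun _ => i := by
  simp only [Fin.cons_zero]
  constructor
  · intro h; funext k; simpa [Fin.cons_succ] using h k.succ
  · rintro rfl k
    cases k using Fin.cases <;> simp

lemma tApplyC_shift {m n : ℕ} (T : Tensor m n) (c : ℝ) (x : Fin n → ℂ) (i : Fin n) :
    tApplyC (fun idx => c * unitT m n idx + T idx) x i = c * x i ^ m + tApplyC T x i := by
  unfold tApplyC
  have key : ∀ j : Fin m → Fin n,
      ((c * unitT m n (Fin.cons i j) + T (Fin.cons i j) : ℝ) : ℂ) * ∏ k, x (j k)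
        = (if j = (fun _ => i) then (c : ℂ) * ∏ k, x (j k) else 0)
          + (T (Fin.cons i j) : ℂ) * ∏ k, x (j k) := by
    intro j
    have hu : unitT m n (Fin.cons i j) = if j = (fun _ => i) then (1:ℝ) else 0 := by
      unfold unitT
      rw [if_congr (cons_all_eq_iff i j) rfl rfl]
    rw [hu]
    push_cast
    split <;> push_cast <;> ring
  rw [Finset.sum_congr rfl fun j _ => key j, Finset.sum_add_distrib,
    Finset.sum_ite_eq' Finset.univ (fun _ => i) (fun j => (c : ℂ) * ∏ k, x (j k))]
  simp [Finset.prod_const]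

lemma tApplyC_real {m n : ℕ} (T : Tensor m n) (u : Fin n → ℝ) (i : Fin n) :
    tApplyC T (fun j => (u j : ℂ)) i = (tApply T u i : ℂ) := by
  unfold tApplyC tApply
  push_cast
  rfl

lemma tApply_shift {m n : ℕ} (T : Tensor m n) (c : ℝ) (u : Fin n → ℝ) (i : Fin n) :
    tApply (fun idx => c * unitT m n idx + T idx) u i = c * u i ^ m + tApply T u i := by
  have h := tApplyC_shift T c (fun j => (u j : ℂ)) i
  rw [tApplyC_real, tApplyC_real] at h
  exact_mod_cast h

lemma isEig_shift_iff {m n : ℕ} (T : Tensor m n) (c : ℝ) (μ : ℂ) :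
    IsEig (fun idx => c * unitT m n idx + T idx) μ ↔ IsEig T (μ - c) := by
  constructor
  · rintro ⟨x, hx, heq⟩
    refine ⟨x, hx, fun i => ?_⟩
    have := heq i
    rw [tApplyC_shift] at this
    have : tApplyC T x i = μ * x i ^ m - c * x i ^ m := by linear_combination this
    rw [this]; ring
  · rintro ⟨x, hx, heq⟩
    refine ⟨x, hx, fun i => ?_⟩
    rw [tApplyC_shift, heq i]
    ring

lemma eig_abs_le {m n : ℕ} {T : Tensor m n} {μ : ℂ} (h : IsEig T μ) :
    ‖μ‖ ≤ ∑ idx : Fin (m + 1) → Fin n, |T idx| := by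
  obtain ⟨x, hx, heq⟩ := h
  have hne : Nonempty (Fin n) := by
    by_contra h'
    exact hx (funext fun i => (h' ⟨i⟩).elim)
  obtain ⟨i₀, -, hmax⟩ := Finset.exists_max_image Finset.univ
    (fun i => ‖x i‖) Finset.univ_nonempty
  set M := ‖x i₀‖ with hM
  have hMpos : 0 < M := by
    obtain ⟨i₁, hi₁⟩ := Function.ne_iff.mp hx
    have : (0:ℝ) < ‖x i₁‖ := by
      simpa using (norm_pos_iff.mpr (by simpa using hi₁))
    exact lt_of_lt_of_le this (hmax i₁ (Finset.mem_univ _))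
  have h1 : ‖μ‖ * M ^ m = ‖tApplyC T x i₀‖ := by
    rw [heq i₀, norm_mul, norm_pow]
  have h2 : ‖tApplyC T x i₀‖
      ≤ (∑ j : Fin m → Fin n, |T (Fin.cons i₀ j)|) * M ^ m := by
    unfold tApplyC
    refine le_trans (norm_sum_le _ _) ?_
    rw [Finset.sum_mul]
    refine Finset.sum_le_sum fun j _ => ?_
    rw [norm_mul, Complex.norm_real, Real.norm_eq_abs, norm_prod]
    have hp : ∏ k : Fin m, ‖x (j k)‖ ≤ M ^ m := by
      calc ∏ k : Fin m, ‖x (j k)‖ ≤ ∏ _k : Fin m, M :=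
            Finset.prod_le_prod (fun k _ => norm_nonneg _)
              (fun k _ => hmax _ (Finset.mem_univ _))
        _ = M ^ m := by simp [Finset.prod_const]
    exact mul_le_mul_of_nonneg_left hp (abs_nonneg _)
  have h3 : ‖μ‖ ≤ ∑ j : Fin m → Fin n, |T (Fin.cons i₀ j)| :=
    le_of_mul_le_mul_right (h1 ▸ h2) (pow_pos hMpos m)
  refine h3.trans ?_
  have he : ∑ idx : Fin (m + 1) → Fin n, |T idx|
      = ∑ p : Fin n × (Fin m → Fin n), |T (Fin.cons p.1 p.2)| :=
    (Fintype.sum_equiv (Fin.consEquiv fun _ => Fin n) _ _ (fun p => rfl)).symm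
  rw [he, Fintype.sum_prod_type]
  exact Finset.single_le_sum
    (f := fun i : Fin n => ∑ j : Fin m → Fin n, |T (Fin.cons i j)|)
    (fun i _ => Finset.sum_nonneg fun j _ => abs_nonneg _) (Finset.mem_univ i₀)

lemma specRad_bddAbove {m n : ℕ} (T : Tensor m n) :
    BddAbove {r : ℝ | ∃ lam : ℂ, IsEig T lam ∧ ‖lam‖ = r} :=
  ⟨∑ idx : Fin (m + 1) → Fin n, |T idx|, fun r ⟨_, hl, hr⟩ => hr ▸ eig_abs_le hl⟩

lemma abs_le_specRad {m n : ℕ} {T : Tensor m n} {μ : ℂ} (h : IsEig T μ) :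
    ‖μ‖ ≤ specRad T := le_csSup (specRad_bddAbove T) ⟨μ, h, rfl⟩

lemma isEig_specRad {m n : ℕ} {T : Tensor m n} (u : Fin n → ℝ) (hu0 : u ≠ 0)
    (hequ : ∀ i, tApply T u i = specRad T * u i ^ m) : IsEig T (specRad T : ℂ) := by
  refine ⟨fun j => (u j : ℂ), ?_, fun i => ?_⟩
  · intro h
    apply hu0
    funext j
    have := congrFun h j
    simpa using this
  · rw [tApplyC_real, hequ i]
    push_cast
    ring

/-- an essentially nonnegative tensor has a dominant eigenvalue. -/
theorem stmt6 {m n : ℕ} (A : Tensor m n) (hA : TEssNonneg A)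
    (hPF : ∀ B : Tensor m n, TNonneg B → ∃ u : Fin n → ℝ, u ≠ 0 ∧ (∀ i, 0 ≤ u i) ∧
      ∀ i, tApply B u i = specRad B * (u i) ^ m) :
    ∃ lam : ℝ,
      (∃ u : Fin n → ℝ, u ≠ 0 ∧ (∀ i, 0 ≤ u i) ∧
        ∀ i, tApply A u i = lam * (u i) ^ m) ∧
      (∀ μ : ℂ, IsEig A μ → μ.re ≤ lam) ∧
      (∀ α : ℝ, 0 < α → TNonneg (fun idx => α * unitT m n idx + A idx) →
        lam = specRad (fun idx => α * unitT m n idx + A idx) - α) := by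
  set a0 := shiftAlpha A with ha0
  have hB : TNonneg (fun idx => a0 * unitT m n idx + A idx) := by
    intro idx
    by_cases hd : ∀ k, idx k = idx 0
    · have hidx : idx = fun _ => idx 0 := funext hd
      have h1 : unitT m n idx = 1 := if_pos hd
      simp only [h1, mul_one]
      have h2 : |A (fun _ => idx 0)| ≤ ∑ i : Fin n, |A (fun _ => i)| :=
        Finset.single_le_sum (f := fun i : Fin n => |A (fun _ => i)|)
          (fun i _ => abs_nonneg _) (Finset.mem_univ (idx 0))
      have h3 := neg_abs_le (A (fun _ => idx 0))
      rw [hidx, ha0]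
      unfold shiftAlpha
      linarith
    · have h1 : unitT m n idx = 0 := if_neg hd
      simp only [h1, mul_zero, zero_add]
      exact hA idx hd
  obtain ⟨u, hu0, hun, hueq⟩ := hPF _ hB
  set sB := specRad (fun idx => a0 * unitT m n idx + A idx) with hsB
  have hBeig : IsEig (fun idx => a0 * unitT m n idx + A idx) (sB : ℂ) :=
    isEig_specRad u hu0 hueq
  refine ⟨sB - a0, ⟨u, hu0, hun, fun i => ?_⟩, fun μ hμ => ?_, fun α hα hC => ?_⟩
  · have h := hueq i
    rw [tApply_shift A a0 u i] at h
    have : tApply A u i = sB * u i ^ m - a0 * u i ^ m := by linarith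
    rw [this]; ring
  · have h1 : IsEig (fun idx => a0 * unitT m n idx + A idx) (μ + a0) := by
      rw [isEig_shift_iff]
      simpa using hμ
    have h2 := abs_le_specRad h1
    have h3 : (μ + (a0 : ℂ)).re ≤ ‖μ + a0‖ := Complex.re_le_norm _
    have h4 : (μ + (a0 : ℂ)).re = μ.re + a0 := by simp
    rw [← hsB] at h2
    linarith
  · obtain ⟨v, hv0, hvn, hveq⟩ := hPF _ hC
    set sC := specRad (fun idx => α * unitT m n idx + A idx) with hsC
    have hCeig : IsEig (fun idx => α * unitT m n idx + A idx) (sC : ℂ) :=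
      isEig_specRad v hv0 hveq
    -- sC - α + a0 is an eigenvalue of B
    have e1 : IsEig A ((sC : ℂ) - α) := (isEig_shift_iff A α _).mp hCeig
    have e2 : IsEig (fun idx => a0 * unitT m n idx + A idx) ((sC : ℂ) - α + a0) := by
      rw [isEig_shift_iff]
      simpa using e1
    have le1 : sC - α + a0 ≤ sB := by
      have hb := abs_le_specRad e2
      rw [← hsB] at hb
      have hr : ((sC : ℂ) - α + a0).re ≤ ‖(sC : ℂ) - α + a0‖ :=
        Complex.re_le_norm _
      have hre : ((sC : ℂ) - α + a0).re = sC - α + a0 := by simp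
      linarith
    -- sB - a0 + α is an eigenvalue of C
    have e3 : IsEig A ((sB : ℂ) - a0) := (isEig_shift_iff A a0 _).mp hBeig
    have e4 : IsEig (fun idx => α * unitT m n idx + A idx) ((sB : ℂ) - a0 + α) := by
      rw [isEig_shift_iff]
      simpa using e3
    have le2 : sB - a0 + α ≤ sC := by
      have hb := abs_le_specRad e4
      rw [← hsC] at hb
      have hr : ((sB : ℂ) - a0 + α).re ≤ ‖(sB : ℂ) - a0 + α‖ :=
        Complex.re_le_norm _
      have hre : ((sB : ℂ) - a0 + α).re = sB - a0 + α := by simp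
      linarith
    linarith
end

section
/- Let A be an irreducible nonnegative tensor of order m and dimension n, and let C, D be nonnegative diagonal tensors. Then for every t ∈ [0,1], ρ(A + tC + (1−t)D) ≤ t·ρ(A + C) + (1−t)·ρ(A + D), i.e., the spectral radius is a convex function of the diagonal entries. -/
open Finset

lemma tApply_add' {m n : ℕ} (A B : Tensor m n) (z : Fin n → ℝ) (i : Fin n) :
    tApply (fun idx => A idx + B idx) z i = tApply A z i + tApply B z i := by
  simp [tApply, add_mul, Finset.sum_add_distrib]

lemma tApply_smul' {m n : ℕ} (c : ℝ) (A : Tensor m n) (z : Fin n → ℝ) (i : Fin n) :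
    tApply (fun idx => c * A idx) z i = c * tApply A z i := by
  simp [tApply, Finset.mul_sum, mul_assoc]

lemma tApply_diag' {m n : ℕ} {C : Tensor m n} (hC : TDiagonal C) (z : Fin n → ℝ) (i : Fin n) :
    tApply C z i = C (fun _ => i) * z i ^ m := by
  unfold tApply
  rw [Finset.sum_eq_single (fun _ => i)]
  · have h1 : (Fin.cons i (fun _ => i) : Fin (m+1) → Fin n) = fun _ => i := by
      funext k; refine Fin.cases rfl (fun k' => rfl) k
    rw [h1, Finset.prod_const, Finset.card_univ, Fintype.card_fin]
  · intro j _ hj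
    have h2 : ¬ ∀ k, (Fin.cons i j : Fin (m+1) → Fin n) k = (Fin.cons i j : Fin (m+1) → Fin n) 0 := by
      intro hall
      apply hj
      funext k
      have := hall k.succ
      simpa using this
    rw [hC _ h2, zero_mul]
  · intro h; exact absurd (Finset.mem_univ _) h

lemma irr_add' {m n : ℕ} {A E : Tensor m n} (hA : TNonneg A) (hE : TNonneg E)
    (hirr : TIrreducible A) : TIrreducible (fun idx => A idx + E idx) := by
  rintro ⟨S, h1, h2, h3⟩
  refine hirr ⟨S, h1, h2, fun i hi j hj => ?_⟩
  have h : A (Fin.cons i j) + E (Fin.cons i j) = 0 := h3 i hi j hj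
  have hA' := hA (Fin.cons i j)
  have hE' := hE (Fin.cons i j)
  linarith

lemma rpow_pow_comm' {a : ℝ} (ha : 0 ≤ a) (s : ℝ) (k : ℕ) :
    (a ^ s) ^ (k : ℕ) = (a ^ (k : ℕ)) ^ s := by
  rw [← Real.rpow_natCast (a ^ s) k, ← Real.rpow_mul ha, mul_comm, Real.rpow_mul ha,
    Real.rpow_natCast]

/-- convexity of the spectral radius in the diagonal entries. -/
theorem stmt8 {m n : ℕ} (hn : 0 < n) (A C D : Tensor m n)
    (hA : TNonneg A) (hirr : TIrreducible A)
    (hC : TDiagonal C) (hCnn : TNonneg C)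
    (hD : TDiagonal D) (hDnn : TNonneg D)
    (hPF : ∀ B : Tensor m n, TNonneg B → TIrreducible B →
      ∃ x : Fin n → ℝ, (∀ i, 0 < x i) ∧ 0 < specRad B ∧
        ∀ i, tApply B x i = specRad B * (x i) ^ m)
    (hCollatz : ∀ B : Tensor m n, TNonneg B → ∀ z : Fin n → ℝ, (∀ i, 0 < z i) →
      specRad B ≤ Finset.univ.sup' (Finset.univ_nonempty_iff.mpr ⟨⟨0, hn⟩⟩)
        (fun i => tApply B z i / (z i) ^ m))
    (t : ℝ) (ht : t ∈ Set.Icc (0 : ℝ) 1) :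
    specRad (fun idx => A idx + t * C idx + (1 - t) * D idx) ≤
      t * specRad (fun idx => A idx + C idx) +
        (1 - t) * specRad (fun idx => A idx + D idx) := by
  obtain ⟨ht0, ht1⟩ := ht
  have ht1' : (0:ℝ) ≤ 1 - t := by linarith
  set AC : Tensor m n := fun idx => A idx + C idx with hACdef
  set AD : Tensor m n := fun idx => A idx + D idx with hADdef
  have hACnn : TNonneg AC := fun idx => add_nonneg (hA idx) (hCnn idx)
  have hADnn : TNonneg AD := fun idx => add_nonneg (hA idx) (hDnn idx)
  obtain ⟨x, hx, hr1pos, hex⟩ := hPF AC hACnn (irr_add' hA hCnn hirr)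
  obtain ⟨y, hy, hr2pos, hey⟩ := hPF AD hADnn (irr_add' hA hDnn hirr)
  set r1 := specRad AC with hr1
  set r2 := specRad AD with hr2
  set B : Tensor m n := fun idx => A idx + t * C idx + (1 - t) * D idx with hBdef
  have hBnn : TNonneg B := fun idx => by
    have h1 := hA idx
    have h2 : 0 ≤ t * C idx := mul_nonneg ht0 (hCnn idx)
    have h3 : 0 ≤ (1 - t) * D idx := mul_nonneg ht1' (hDnn idx)
    show 0 ≤ A idx + t * C idx + (1 - t) * D idx
    linarith
  set z : Fin n → ℝ := fun i => x i ^ t * y i ^ (1 - t) with hzdef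
  have hz : ∀ i, 0 < z i := fun i =>
    mul_pos (Real.rpow_pos_of_pos (hx i) t) (Real.rpow_pos_of_pos (hy i) (1 - t))
  have key : ∀ i, tApply B z i ≤ (t * r1 + (1 - t) * r2) * z i ^ m := by
    intro i
    set c := C (fun _ => i) with hc
    set d := D (fun _ => i) with hd
    have hxm : (0:ℝ) < x i ^ m := pow_pos (hx i) m
    have hym : (0:ℝ) < y i ^ m := pow_pos (hy i) m
    have hzm : (0:ℝ) < z i ^ m := pow_pos (hz i) m
    have hAx : tApply A x i = (r1 - c) * x i ^ m := by
      have h1 := hex i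
      rw [hACdef, tApply_add' A C x i, tApply_diag' hC x i] at h1
      rw [← hc] at h1
      linarith
    have hAy : tApply A y i = (r2 - d) * y i ^ m := by
      have h1 := hey i
      rw [hADdef, tApply_add' A D y i, tApply_diag' hD y i] at h1
      rw [← hd] at h1
      linarith
    have hBexp : tApply B z i = tApply A z i + t * (c * z i ^ m) + (1 - t) * (d * z i ^ m) := by
      rw [hBdef, tApply_add', tApply_add', tApply_smul', tApply_smul',
        tApply_diag' hC z i, tApply_diag' hD z i, ← hc, ← hd]
    have hzm_eq : z i ^ m = (x i ^ m) ^ t * (y i ^ m) ^ (1 - t) := by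
      show (x i ^ t * y i ^ (1 - t)) ^ m = _
      rw [mul_pow, rpow_pow_comm' (hx i).le, rpow_pow_comm' (hy i).le]
    have hmain : tApply A z i ≤ (t * (r1 - c) + (1 - t) * (r2 - d)) * z i ^ m := by
      have hterm : ∀ j : Fin m → Fin n,
          A (Fin.cons i j) * ∏ k, z (j k) ≤
          A (Fin.cons i j) * (z i ^ m *
            (t * ((∏ k, x (j k)) / x i ^ m) + (1 - t) * ((∏ k, y (j k)) / y i ^ m))) := by
        intro j
        have hPnn : (0:ℝ) ≤ ∏ k, x (j k) := Finset.prod_nonneg fun k _ => (hx _).le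
        have hQnn : (0:ℝ) ≤ ∏ k, y (j k) := Finset.prod_nonneg fun k _ => (hy _).le
        have hp1 : (0:ℝ) ≤ (∏ k, x (j k)) / x i ^ m := div_nonneg hPnn hxm.le
        have hp2 : (0:ℝ) ≤ (∏ k, y (j k)) / y i ^ m := div_nonneg hQnn hym.le
        have hprod : ∏ k, z (j k) =
            z i ^ m * (((∏ k, x (j k)) / x i ^ m) ^ t * ((∏ k, y (j k)) / y i ^ m) ^ (1 - t)) := by
          have e1 : ∏ k, z (j k) = (∏ k, x (j k)) ^ t * (∏ k, y (j k)) ^ (1 - t) := by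
            simp only [hzdef]
            rw [Finset.prod_mul_distrib,
              Real.finset_prod_rpow _ _ (fun k _ => (hx _).le) t,
              Real.finset_prod_rpow _ _ (fun k _ => (hy _).le) (1 - t)]
          rw [e1, hzm_eq, Real.div_rpow hPnn hxm.le, Real.div_rpow hQnn hym.le]
          have hXt : (x i ^ m) ^ t ≠ 0 := (Real.rpow_pos_of_pos hxm t).ne'
          have hYt : (y i ^ m) ^ (1 - t) ≠ 0 := (Real.rpow_pos_of_pos hym (1 - t)).ne'
          field_simp
        have hgm := Real.geom_mean_le_arith_mean2_weighted ht0 ht1' hp1 hp2 (by ring)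
        rw [hprod]
        have hAnn := hA (Fin.cons i j)
        have := mul_le_mul_of_nonneg_left (mul_le_mul_of_nonneg_left hgm hzm.le) hAnn
        linarith
      calc tApply A z i ≤ ∑ j : Fin m → Fin n, A (Fin.cons i j) * (z i ^ m *
            (t * ((∏ k, x (j k)) / x i ^ m) + (1 - t) * ((∏ k, y (j k)) / y i ^ m))) :=
          Finset.sum_le_sum fun j _ => hterm j
        _ = (z i ^ m * t / x i ^ m) * ∑ j : Fin m → Fin n, A (Fin.cons i j) * ∏ k, x (j k)
            + (z i ^ m * (1 - t) / y i ^ m) * ∑ j : Fin m → Fin n, A (Fin.cons i j) * ∏ k, y (j k) := by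
          rw [Finset.mul_sum, Finset.mul_sum, ← Finset.sum_add_distrib]
          refine Finset.sum_congr rfl fun j _ => ?_
          field_simp
        _ = (z i ^ m * t / x i ^ m) * ((r1 - c) * x i ^ m)
            + (z i ^ m * (1 - t) / y i ^ m) * ((r2 - d) * y i ^ m) := by
          rw [← hAx, ← hAy]; rfl
        _ = (t * (r1 - c) + (1 - t) * (r2 - d)) * z i ^ m := by
          field_simp
    rw [hBexp]
    nlinarith [hmain]
  calc specRad B ≤ Finset.univ.sup' (Finset.univ_nonempty_iff.mpr ⟨⟨0, hn⟩⟩)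
        (fun i => tApply B z i / (z i) ^ m) := hCollatz B hBnn z hz
    _ ≤ t * r1 + (1 - t) * r2 := Finset.sup'_le _ _ fun i _ =>
        (div_le_iff₀ (pow_pos (hz i) m)).mpr (key i)
end

section
/- Let x, y ∈ R^n be strictly positive vectors, let A be a nonnegative tensor of order m and dimension n, and let t ∈ [0,1]. Define z by z_i = x_i^t y_i^{1−t}. Then for each index i, (A z^{m-1})_i / z_i^{m-1} ≤ ((A x^{m-1})_i / x_i^{m-1})^t · ((A y^{m-1})_i / y_i^{m-1})^{1−t}. -/
open Finset

lemma holder_aux {ι : Type*} [Fintype ι] (u v : ι → ℝ) (hu : ∀ i, 0 ≤ u i) (hv : ∀ i, 0 ≤ v i)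
    {t : ℝ} (ht0 : 0 ≤ t) (ht1 : t ≤ 1) :
    ∑ i, (u i) ^ t * (v i) ^ (1 - t) ≤ (∑ i, u i) ^ t * (∑ i, v i) ^ (1 - t) := by
  rcases eq_or_lt_of_le ht0 with h0 | h0
  · simp [← h0]
  rcases eq_or_lt_of_le ht1 with h1 | h1
  · simp [h1]
  have hpq : Real.HolderConjugate (1 / t) (1 / (1 - t)) := by
    constructor
    · rw [one_div, one_div, inv_inv, inv_inv]; ring
    · exact one_div_pos.mpr h0
    · exact one_div_pos.mpr (by linarith)
  have := Real.inner_le_Lp_mul_Lq_of_nonneg Finset.univ hpq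
    (f := fun i => u i ^ t) (g := fun i => v i ^ (1 - t))
    (fun i _ => Real.rpow_nonneg (hu i) t) (fun i _ => Real.rpow_nonneg (hv i) (1 - t))
  simpa [← Real.rpow_mul, hu _, hv _, mul_inv_cancel₀ h0.ne',
    mul_inv_cancel₀ (by linarith : (1:ℝ) - t ≠ 0), one_div_one_div] using this

lemma rpow_interp_self {a t : ℝ} (ha : 0 ≤ a) (ht0 : 0 ≤ t) (ht1 : t ≤ 1) :
    a ^ t * a ^ (1 - t) = a := by
  rcases eq_or_lt_of_le ha with h | h
  · rcases eq_or_lt_of_le ht0 with h0 | h0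
    · simp [← h0, ← h]
    · rw [← h, Real.zero_rpow h0.ne', zero_mul]
  · rw [← Real.rpow_add h]; simp

/-- Hölder inequality for the Collatz quotients. -/
theorem stmt9 {m n : ℕ} (A : Tensor m n) (hA : TNonneg A)
    (x y : Fin n → ℝ) (hx : ∀ i, 0 < x i) (hy : ∀ i, 0 < y i)
    (t : ℝ) (ht : t ∈ Set.Icc (0 : ℝ) 1)
    (z : Fin n → ℝ) (hz : ∀ i, z i = x i ^ t * y i ^ (1 - t)) :
    ∀ i, tApply A z i / (z i) ^ m ≤
      (tApply A x i / (x i) ^ m) ^ t * (tApply A y i / (y i) ^ m) ^ (1 - t) := by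
  obtain ⟨ht0, ht1⟩ := ht
  intro i
  have hxn : 0 ≤ tApply A x i := Finset.sum_nonneg fun j _ =>
    mul_nonneg (hA _) (Finset.prod_nonneg fun k _ => (hx _).le)
  have hyn : 0 ≤ tApply A y i := Finset.sum_nonneg fun j _ =>
    mul_nonneg (hA _) (Finset.prod_nonneg fun k _ => (hy _).le)
  have hzi : 0 < z i := by
    rw [hz]; exact mul_pos (Real.rpow_pos_of_pos (hx i) t) (Real.rpow_pos_of_pos (hy i) _)
  -- numerator inequality
  have hnum : tApply A z i ≤ (tApply A x i) ^ t * (tApply A y i) ^ (1 - t) := by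
    have key : tApply A z i = ∑ j : Fin m → Fin n,
        (A (Fin.cons i j) * ∏ k, x (j k)) ^ t * (A (Fin.cons i j) * ∏ k, y (j k)) ^ (1 - t) := by
      unfold tApply
      refine Finset.sum_congr rfl fun j _ => ?_
      rw [Real.mul_rpow (hA _) (Finset.prod_nonneg fun k _ => (hx _).le),
        Real.mul_rpow (hA _) (Finset.prod_nonneg fun k _ => (hy _).le)]
      rw [show A (Fin.cons i j) ^ t * (∏ k, x (j k)) ^ t *
          (A (Fin.cons i j) ^ (1 - t) * (∏ k, y (j k)) ^ (1 - t)) =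
          (A (Fin.cons i j) ^ t * A (Fin.cons i j) ^ (1 - t)) *
          ((∏ k, x (j k)) ^ t * (∏ k, y (j k)) ^ (1 - t)) by ring,
        rpow_interp_self (hA _) ht0 ht1,
        ← Real.finset_prod_rpow _ _ (fun k _ => (hx _).le),
        ← Real.finset_prod_rpow _ _ (fun k _ => (hy _).le), ← Finset.prod_mul_distrib]
      congr 1
      exact Finset.prod_congr rfl fun k _ => hz _
    rw [key]
    exact holder_aux _ _ (fun j => mul_nonneg (hA _) (Finset.prod_nonneg fun k _ => (hx _).le))
      (fun j => mul_nonneg (hA _) (Finset.prod_nonneg fun k _ => (hy _).le)) ht0 ht1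
  -- denominator identity
  have hden : (z i) ^ m = ((x i) ^ m) ^ t * ((y i) ^ m) ^ (1 - t) := by
    rw [hz, mul_pow, ← Real.rpow_natCast (x i ^ t), ← Real.rpow_natCast (y i ^ (1 - t)),
      ← Real.rpow_mul (hx i).le, ← Real.rpow_mul (hy i).le, mul_comm t, mul_comm (1 - t),
      Real.rpow_mul (hx i).le, Real.rpow_mul (hy i).le, Real.rpow_natCast, Real.rpow_natCast]
  rw [Real.div_rpow hxn (pow_nonneg (hx i).le m), Real.div_rpow hyn (pow_nonneg (hy i).le m),
    div_mul_div_comm, ← hden]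
  gcongr
end

section
/- In the convexity inequality ρ(A + tC + (1−t)D) ≤ t·ρ(A + C) + (1−t)·ρ(A + D) for an irreducible nonnegative tensor A and nonnegative diagonal tensors C, D, equality holds for some t ∈ (0,1) if and only if D − C is a scalar multiple of the unit tensor I, and in that case the scalar is ρ(A + D) − ρ(A + C). -/
open Finset

namespace Stmt10Aux

variable {m n : ℕ}

lemma tApply_nonneg {T : Tensor m n} (hT : TNonneg T) {x : Fin n → ℝ} (hx : ∀ i, 0 ≤ x i)
    (i : Fin n) : 0 ≤ tApply T x i :=
  Finset.sum_nonneg fun _ _ => mul_nonneg (hT _) (Finset.prod_nonneg fun _ _ => hx _)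

lemma tApply_add (T S : Tensor m n) (x : Fin n → ℝ) (i : Fin n) :
    tApply (fun idx => T idx + S idx) x i = tApply T x i + tApply S x i := by
  simp [tApply, add_mul, Finset.sum_add_distrib]

lemma tApply_smul (c : ℝ) (T : Tensor m n) (x : Fin n → ℝ) (i : Fin n) :
    tApply (fun idx => c * T idx) x i = c * tApply T x i := by
  simp [tApply, mul_assoc, Finset.mul_sum]

lemma cons_const (i : Fin n) : (Fin.cons i (fun _ => i) : Fin (m + 1) → Fin n) = fun _ => i := by
  funext k
  refine Fin.cases ?_ ?_ k <;> simp

lemma tApply_diag {T : Tensor m n} (hT : TDiagonal T) (x : Fin n → ℝ) (i : Fin n) :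
    tApply T x i = T (fun _ => i) * x i ^ m := by
  unfold tApply
  rw [Fintype.sum_eq_single (fun _ => i : Fin m → Fin n)]
  · rw [cons_const]
    simp
  · intro j hj
    set idx : Fin (m + 1) → Fin n := Fin.cons i j with hidx
    have hne : ¬ ∀ k, idx k = idx 0 := by
      intro h
      apply hj
      funext k
      have := h k.succ
      simpa [hidx] using this
    rw [hT _ hne, zero_mul]

lemma unitT_diag : TDiagonal (unitT m n) := fun _ h => if_neg h

lemma unitT_const (i : Fin n) : unitT m n (fun _ => i) = 1 := if_pos (fun _ => rfl)

lemma unitT_nonneg : TNonneg (unitT m n) := by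
  intro idx
  unfold unitT
  split <;> norm_num

lemma irr_mono {A B : Tensor m n} (hA : TNonneg A) (hle : ∀ idx, A idx ≤ B idx)
    (h : TIrreducible A) : TIrreducible B := by
  rintro ⟨S, hS1, hS2, hS3⟩
  exact h ⟨S, hS1, hS2, fun i hi j hj =>
    le_antisymm ((hle _).trans_eq (hS3 i hi j hj)) (hA _)⟩

/-- If `x` is a positive exact eigenvector of an irreducible nonnegative tensor `B` with
eigenvalue `ρ`, and `z > 0` satisfies `B z ≤ ρ z^{[m]}` pointwise, then equality holds. -/
lemma eig_le_eq {B : Tensor m n} (hB : TNonneg B) (hirr : TIrreducible B)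
    {x z : Fin n → ℝ} (hx : ∀ i, 0 < x i) (hz : ∀ i, 0 < z i) {ρ : ℝ}
    (heig : ∀ i, tApply B x i = ρ * x i ^ m)
    (hle : ∀ i, tApply B z i ≤ ρ * z i ^ m) :
    ∀ i, tApply B z i = ρ * z i ^ m := by
  rcases Nat.eq_zero_or_pos m with hm | hm
  · subst hm
    intro i
    have h1 := heig i
    simp only [pow_zero, mul_one] at h1 ⊢
    rw [← h1]
    exact Finset.sum_congr rfl fun j _ => by simp
  · intro i
    have hne : (Finset.univ : Finset (Fin n)).Nonempty := ⟨i, Finset.mem_univ i⟩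
    set θ := Finset.univ.inf' hne (fun j => z j / x j) with hθ
    have hθpos : 0 < θ := by
      rw [hθ, Finset.lt_inf'_iff]
      exact fun j _ => div_pos (hz j) (hx j)
    have hθle : ∀ j, θ * x j ≤ z j := by
      intro j
      have this : θ ≤ z j / x j := Finset.inf'_le _ (Finset.mem_univ j)
      calc θ * x j ≤ (z j / x j) * x j := by
            exact mul_le_mul_of_nonneg_right this (hx j).le
        _ = z j := div_mul_cancel₀ _ (hx j).ne'
    -- pointwise lower bound
    have hlow : ∀ a, ρ * (θ * x a) ^ m ≤ tApply B z a := by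
      intro a
      have : θ ^ m * tApply B x a ≤ tApply B z a := by
        rw [tApply, tApply, Finset.mul_sum]
        refine Finset.sum_le_sum fun j _ => ?_
        have h1 : θ ^ m * (B (Fin.cons a j) * ∏ k, x (j k))
            = B (Fin.cons a j) * ∏ k, (θ * x (j k)) := by
          rw [Finset.prod_mul_distrib, Finset.prod_const]
          simp [Finset.card_univ]
          ring
        rw [h1]
        refine mul_le_mul_of_nonneg_left ?_ (hB _)
        exact Finset.prod_le_prod (fun k _ => (mul_pos hθpos (hx _)).le)
          (fun k _ => hθle _)
      calc ρ * (θ * x a) ^ m = θ ^ m * (ρ * x a ^ m) := by ring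
        _ = θ ^ m * tApply B x a := by rw [heig a]
        _ ≤ tApply B z a := this
    -- the coincidence set
    set S : Finset (Fin n) := Finset.univ.filter (fun j => z j = θ * x j) with hS
    have hSmem : ∀ j, j ∈ S ↔ z j = θ * x j := by
      intro j; simp [hS]
    have hSeq : ∀ j ∈ S, tApply B z j = ρ * z j ^ m := by
      intro j hj
      have hzj := (hSmem j).1 hj
      refine le_antisymm (hle j) ?_
      calc ρ * z j ^ m = ρ * (θ * x j) ^ m := by rw [hzj]
        _ ≤ tApply B z j := hlow j
    have hSprop : ∀ a ∈ S, ∀ j : Fin m → Fin n, B (Fin.cons a j) ≠ 0 → ∀ k, j k ∈ S := by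
      intro a ha j hBj k
      have hza := (hSmem a).1 ha
      have hsum : ∑ jj : Fin m → Fin n,
          B (Fin.cons a jj) * ((∏ kk, z (jj kk)) - ∏ kk, (θ * x (jj kk))) = 0 := by
        have e1 : tApply B z a = ρ * (θ * x a) ^ m := by
          rw [hSeq a ha, hza]
        have e2 : ρ * (θ * x a) ^ m = ∑ jj : Fin m → Fin n,
            B (Fin.cons a jj) * ∏ kk, (θ * x (jj kk)) := by
          have : ∀ jj : Fin m → Fin n, B (Fin.cons a jj) * ∏ kk, (θ * x (jj kk))
              = θ ^ m * (B (Fin.cons a jj) * ∏ kk, x (jj kk)) := by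
            intro jj
            rw [Finset.prod_mul_distrib, Finset.prod_const]
            simp [Finset.card_univ]
            ring
          rw [Finset.sum_congr rfl fun jj _ => this jj, ← Finset.mul_sum, ← tApply, heig a]
          ring
        have : (∑ jj : Fin m → Fin n, B (Fin.cons a jj) * ∏ kk, z (jj kk))
            = ∑ jj : Fin m → Fin n, B (Fin.cons a jj) * ∏ kk, (θ * x (jj kk)) := by
          rw [← tApply, e1, e2]
        simp only [mul_sub]
        rw [Finset.sum_sub_distrib, sub_eq_zero]
        exact this
      have hterm : B (Fin.cons a j) * ((∏ kk, z (j kk)) - ∏ kk, (θ * x (j kk))) = 0 := by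
        have hnn : ∀ jj ∈ (Finset.univ : Finset (Fin m → Fin n)),
            0 ≤ B (Fin.cons a jj) * ((∏ kk, z (jj kk)) - ∏ kk, (θ * x (jj kk))) := by
          intro jj _
          refine mul_nonneg (hB _) (sub_nonneg.2 ?_)
          exact Finset.prod_le_prod (fun kk _ => (mul_pos hθpos (hx _)).le)
            (fun kk _ => hθle _)
        exact (Finset.sum_eq_zero_iff_of_nonneg hnn).1 hsum _ (Finset.mem_univ j)
      have hprodeq : (∏ kk, z (j kk)) = ∏ kk, (θ * x (j kk)) := by
        rcases mul_eq_zero.1 hterm with h | h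
        · exact absurd h hBj
        · linarith [sub_eq_zero.1 h]
      by_contra hk
      rw [hSmem] at hk
      have hklt : θ * x (j k) < z (j k) := lt_of_le_of_ne (hθle _) (fun h => hk h.symm)
      have : (∏ kk, (θ * x (j kk))) < ∏ kk, z (j kk) := by
        refine Finset.prod_lt_prod (fun kk _ => mul_pos hθpos (hx _))
          (fun kk _ => hθle _) ⟨k, Finset.mem_univ k, hklt⟩
      rw [hprodeq] at this
      exact lt_irrefl _ this
    have hSuniv : S = Finset.univ := by
      by_contra hSne
      obtain ⟨i0, -, hi0⟩ := Finset.exists_mem_eq_inf' hne (fun j => z j / x j)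
      have hθ0 : θ = z i0 / x i0 := hi0
      have hi0S : i0 ∈ S := by
        rw [hSmem, hθ0, div_mul_cancel₀ _ (hx i0).ne']
      refine hirr ⟨S, ⟨i0, hi0S⟩, hSne, fun a ha j hj => ?_⟩
      by_contra hB0
      exact hj ⟨0, hm⟩ (hSprop a ha j hB0 ⟨0, hm⟩)
    have : i ∈ S := hSuniv ▸ Finset.mem_univ i
    exact hSeq i this

lemma amgm_le {t p q : ℝ} (ht0 : 0 < t) (ht1 : t < 1) (hp : 0 ≤ p) (hq : 0 ≤ q) :
    p ^ t * q ^ (1 - t) ≤ t * p + (1 - t) * q :=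
  Real.geom_mean_le_arith_mean2_weighted ht0.le (by linarith) hp hq (by ring)

lemma amgm_eq {t p q : ℝ} (ht0 : 0 < t) (ht1 : t < 1) (hp : 0 ≤ p) (hq : 0 ≤ q)
    (h : p ^ t * q ^ (1 - t) = t * p + (1 - t) * q) : p = q := by
  have ht1' : (0:ℝ) < 1 - t := by linarith
  rcases eq_or_lt_of_le hp with hp0 | hp0
  · rw [← hp0, Real.zero_rpow ht0.ne', zero_mul] at h
    have : q = 0 := by nlinarith
    rw [← hp0, this]
  rcases eq_or_lt_of_le hq with hq0 | hq0
  · rw [← hq0, Real.zero_rpow ht1'.ne', mul_zero] at h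
    have : p = 0 := by nlinarith
    rw [← hq0, this]
  by_contra hne
  have hstrict : p ^ t * q ^ (1 - t) < t * p + (1 - t) * q := by
    have hlog : t * Real.log p + (1 - t) * Real.log q < Real.log (t * p + (1 - t) * q) := by
      have := strictConcaveOn_log_Ioi.2 (Set.mem_Ioi.2 hp0) (Set.mem_Ioi.2 hq0) hne ht0 ht1'
        (by ring)
      simpa [smul_eq_mul] using this
    have e1 : p ^ t * q ^ (1 - t) = Real.exp (t * Real.log p + (1 - t) * Real.log q) := by
      rw [Real.exp_add, Real.rpow_def_of_pos hp0, Real.rpow_def_of_pos hq0, mul_comm (Real.log p),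
        mul_comm (Real.log q)]
    have hsum : 0 < t * p + (1 - t) * q := by positivity
    rw [e1, ← Real.exp_log hsum]
    exact Real.exp_lt_exp.2 hlog
  linarith [h]

lemma holder_sum {ι : Type*} [Fintype ι] {t : ℝ} (ht0 : 0 < t) (ht1 : t < 1)
    (F G : ι → ℝ) (hF : ∀ j, 0 ≤ F j) (hG : ∀ j, 0 ≤ G j) :
    ∑ j, F j ^ t * G j ^ (1 - t) ≤ (∑ j, F j) ^ t * (∑ j, G j) ^ (1 - t) := by
  have ht1' : (0:ℝ) < 1 - t := by linarith
  have hpq : Real.HolderConjugate (1 / t) (1 / (1 - t)) := by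
    refine ⟨?_, one_div_pos.2 ht0, one_div_pos.2 ht1'⟩
    · rw [one_div, one_div, inv_inv, inv_inv, inv_one]; ring
  have h := Real.inner_le_Lp_mul_Lq_of_nonneg (s := Finset.univ)
    (f := fun j => F j ^ t) (g := fun j => G j ^ (1 - t)) hpq
    (fun j _ => Real.rpow_nonneg (hF j) t) (fun j _ => Real.rpow_nonneg (hG j) (1 - t))
  have e1 : ∀ j, (F j ^ t) ^ (1 / t) = F j := by
    intro j
    rw [← Real.rpow_mul (hF j), mul_one_div_cancel ht0.ne', Real.rpow_one]
  have e2 : ∀ j, (G j ^ (1 - t)) ^ (1 / (1 - t)) = G j := by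
    intro j
    rw [← Real.rpow_mul (hG j), mul_one_div_cancel ht1'.ne', Real.rpow_one]
  simp only [e1, e2, one_div_one_div] at h
  exact h

lemma rpow_self_mul {a : ℝ} (ha : 0 ≤ a) {t : ℝ} (ht0 : 0 < t) (ht1 : t < 1) :
    a ^ t * a ^ (1 - t) = a := by
  rcases eq_or_lt_of_le ha with h | h
  · rw [← h, Real.zero_rpow ht0.ne', zero_mul]
  · rw [← Real.rpow_add h]
    norm_num

lemma pow_rpow_comm {a : ℝ} (ha : 0 ≤ a) (r : ℝ) (M : ℕ) : (a ^ M) ^ r = (a ^ r) ^ M := by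
  rw [← Real.rpow_natCast a M, ← Real.rpow_natCast (a ^ r) M, ← Real.rpow_mul ha,
    ← Real.rpow_mul ha, mul_comm]

/-- Hölder inequality for a row of a nonnegative tensor. -/
lemma tApply_holder {A : Tensor m n} (hA : TNonneg A) {u v : Fin n → ℝ}
    (hu : ∀ i, 0 < u i) (hv : ∀ i, 0 < v i) {t : ℝ} (ht0 : 0 < t) (ht1 : t < 1) (i : Fin n) :
    tApply A (fun a => u a ^ t * v a ^ (1 - t)) i
      ≤ (tApply A u i) ^ t * (tApply A v i) ^ (1 - t) := by
  have key : ∀ j : Fin m → Fin n,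
      A (Fin.cons i j) * ∏ k, (u (j k) ^ t * v (j k) ^ (1 - t))
        = (A (Fin.cons i j) * ∏ k, u (j k)) ^ t
          * (A (Fin.cons i j) * ∏ k, v (j k)) ^ (1 - t) := by
    intro j
    have hpu : (0:ℝ) ≤ ∏ k, u (j k) := Finset.prod_nonneg fun k _ => (hu _).le
    have hpv : (0:ℝ) ≤ ∏ k, v (j k) := Finset.prod_nonneg fun k _ => (hv _).le
    rw [Real.mul_rpow (hA _) hpu, Real.mul_rpow (hA _) hpv,
      ← Real.finset_prod_rpow _ _ (fun k _ => (hu _).le) t,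
      ← Real.finset_prod_rpow _ _ (fun k _ => (hv _).le) (1 - t)]
    calc A (Fin.cons i j) * ∏ k, (u (j k) ^ t * v (j k) ^ (1 - t))
        = (A (Fin.cons i j) ^ t * A (Fin.cons i j) ^ (1 - t))
            * ((∏ k, u (j k) ^ t) * (∏ k, v (j k) ^ (1 - t))) := by
          rw [rpow_self_mul (hA _) ht0 ht1, Finset.prod_mul_distrib]
      _ = A (Fin.cons i j) ^ t * (∏ k, u (j k) ^ t)
            * (A (Fin.cons i j) ^ (1 - t) * ∏ k, v (j k) ^ (1 - t)) := by ring
  rw [tApply]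
  rw [Finset.sum_congr rfl fun j _ => key j]
  exact holder_sum ht0 ht1 _ _
    (fun j => mul_nonneg (hA _) (Finset.prod_nonneg fun k _ => (hu _).le))
    (fun j => mul_nonneg (hA _) (Finset.prod_nonneg fun k _ => (hv _).le))

end Stmt10Aux

namespace Stmt10Aux

lemma collatz_le {m n : ℕ} (hn : 0 < n)
    (hCollatz : ∀ B : Tensor m n, TNonneg B → ∀ z : Fin n → ℝ, (∀ i, 0 < z i) →
      specRad B ≤ Finset.univ.sup' (Finset.univ_nonempty_iff.mpr ⟨⟨0, hn⟩⟩)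
        (fun i => tApply B z i / (z i) ^ m))
    {B : Tensor m n} (hB : TNonneg B) {z : Fin n → ℝ} (hz : ∀ i, 0 < z i) {K : ℝ}
    (hK : ∀ i, tApply B z i ≤ K * z i ^ m) : specRad B ≤ K :=
  (hCollatz B hB z hz).trans (Finset.sup'_le _ _ fun i _ =>
    (div_le_iff₀ (pow_pos (hz i) m)).2 (hK i))

lemma spec_shift {m n : ℕ} (hn : 0 < n)
    (hPF : ∀ B : Tensor m n, TNonneg B → TIrreducible B →
      ∃ x : Fin n → ℝ, (∀ i, 0 < x i) ∧ 0 < specRad B ∧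
        ∀ i, tApply B x i = specRad B * (x i) ^ m)
    (hCollatz : ∀ B : Tensor m n, TNonneg B → ∀ z : Fin n → ℝ, (∀ i, 0 < z i) →
      specRad B ≤ Finset.univ.sup' (Finset.univ_nonempty_iff.mpr ⟨⟨0, hn⟩⟩)
        (fun i => tApply B z i / (z i) ^ m))
    {B : Tensor m n} (hB : TNonneg B) (hirr : TIrreducible B) {s : ℝ} (hs : 0 ≤ s) :
    specRad (fun idx => B idx + s * unitT m n idx) = specRad B + s := by
  have hB'nn : TNonneg (fun idx => B idx + s * unitT m n idx) :=
    fun idx => add_nonneg (hB idx) (mul_nonneg hs (unitT_nonneg idx))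
  have hB'irr : TIrreducible (fun idx => B idx + s * unitT m n idx) :=
    irr_mono hB (fun idx => le_add_of_nonneg_right (mul_nonneg hs (unitT_nonneg idx))) hirr
  obtain ⟨x, hx, -, heig⟩ := hPF B hB hirr
  obtain ⟨y, hy, -, heig'⟩ := hPF _ hB'nn hB'irr
  have happ : ∀ (z : Fin n → ℝ) (i : Fin n),
      tApply (fun idx => B idx + s * unitT m n idx) z i = tApply B z i + s * z i ^ m := by
    intro z i
    rw [tApply_add B (fun idx => s * unitT m n idx), tApply_smul, tApply_diag unitT_diag,
      unitT_const, one_mul]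
  have h1 : specRad (fun idx => B idx + s * unitT m n idx) ≤ specRad B + s := by
    refine collatz_le hn hCollatz hB'nn hx ?_
    intro i
    rw [happ, heig i]
    exact le_of_eq (by ring)
  have h2 : specRad B ≤ specRad (fun idx => B idx + s * unitT m n idx) - s := by
    refine collatz_le hn hCollatz hB hy ?_
    intro i
    have h := heig' i
    rw [happ] at h
    exact le_of_eq (by linear_combination h)
  linarith

end Stmt10Aux

open Stmt10Aux

/-- equality case in the convexity of the spectral radius. -/
theorem stmt10 {m n : ℕ} (hn : 0 < n) (A C D : Tensor m n)
    (hA : TNonneg A) (hirr : TIrreducible A)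
    (hC : TDiagonal C) (hCnn : TNonneg C)
    (hD : TDiagonal D) (hDnn : TNonneg D)
    (hPF : ∀ B : Tensor m n, TNonneg B → TIrreducible B →
      ∃ x : Fin n → ℝ, (∀ i, 0 < x i) ∧ 0 < specRad B ∧
        ∀ i, tApply B x i = specRad B * (x i) ^ m)
    (hCollatz : ∀ B : Tensor m n, TNonneg B → ∀ z : Fin n → ℝ, (∀ i, 0 < z i) →
      specRad B ≤ Finset.univ.sup' (Finset.univ_nonempty_iff.mpr ⟨⟨0, hn⟩⟩)
        (fun i => tApply B z i / (z i) ^ m))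
    (t : ℝ) (ht : t ∈ Set.Ioo (0 : ℝ) 1) :
    (specRad (fun idx => A idx + t * C idx + (1 - t) * D idx) =
        t * specRad (fun idx => A idx + C idx) +
          (1 - t) * specRad (fun idx => A idx + D idx) ↔
      ∃ c : ℝ, ∀ idx, D idx - C idx = c * unitT m n idx) ∧
    (specRad (fun idx => A idx + t * C idx + (1 - t) * D idx) =
        t * specRad (fun idx => A idx + C idx) +
          (1 - t) * specRad (fun idx => A idx + D idx) →
      ∀ idx, D idx - C idx =
        (specRad (fun idx => A idx + D idx) -
          specRad (fun idx => A idx + C idx)) * unitT m n idx) := by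
  obtain ⟨ht0, ht1⟩ := ht
  have ht1' : (0:ℝ) < 1 - t := by linarith
  have hBCnn : TNonneg (fun idx => A idx + C idx) := fun idx => add_nonneg (hA idx) (hCnn idx)
  have hBDnn : TNonneg (fun idx => A idx + D idx) := fun idx => add_nonneg (hA idx) (hDnn idx)
  have hBtnn : TNonneg (fun idx => A idx + t * C idx + (1 - t) * D idx) := fun idx =>
    add_nonneg (add_nonneg (hA idx) (mul_nonneg ht0.le (hCnn idx)))
      (mul_nonneg ht1'.le (hDnn idx))
  have hBCirr : TIrreducible (fun idx => A idx + C idx) :=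
    irr_mono hA (fun idx => le_add_of_nonneg_right (hCnn idx)) hirr
  have hBDirr : TIrreducible (fun idx => A idx + D idx) :=
    irr_mono hA (fun idx => le_add_of_nonneg_right (hDnn idx)) hirr
  have hBtirr : TIrreducible (fun idx => A idx + t * C idx + (1 - t) * D idx) :=
    irr_mono hA (fun idx => by
      have h1 := mul_nonneg ht0.le (hCnn idx)
      have h2 := mul_nonneg ht1'.le (hDnn idx)
      linarith) hirr
  obtain ⟨u, hu, -, hequ⟩ := hPF _ hBCnn hBCirr
  obtain ⟨v, hv, -, heqv⟩ := hPF _ hBDnn hBDirr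
  obtain ⟨x, hx, -, heqx⟩ := hPF _ hBtnn hBtirr
  set ρC := specRad (fun idx => A idx + C idx) with hρC
  set ρD := specRad (fun idx => A idx + D idx) with hρD
  set ρt := specRad (fun idx => A idx + t * C idx + (1 - t) * D idx) with hρt
  -- the eigen-equations split into the `A`-part plus the diagonal part
  have hAu : ∀ a, tApply A u a = (ρC - C (fun _ => a)) * u a ^ m := by
    intro a
    have h := hequ a
    rw [tApply_add A C, tApply_diag hC] at h
    linear_combination h
  have hAv : ∀ a, tApply A v a = (ρD - D (fun _ => a)) * v a ^ m := by
    intro a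
    have h := heqv a
    rw [tApply_add A D, tApply_diag hD] at h
    linear_combination h
  have hpnn : ∀ a, 0 ≤ ρC - C (fun _ => a) := by
    intro a
    have h0 := tApply_nonneg hA (fun b => (hu b).le) a
    rw [hAu a] at h0
    nlinarith [pow_pos (hu a) m]
  have hqnn : ∀ a, 0 ≤ ρD - D (fun _ => a) := by
    intro a
    have h0 := tApply_nonneg hA (fun b => (hv b).le) a
    rw [hAv a] at h0
    nlinarith [pow_pos (hv a) m]
  -- application of B_t
  have happt : ∀ (z : Fin n → ℝ) (a : Fin n),
      tApply (fun idx => A idx + t * C idx + (1 - t) * D idx) z a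
        = tApply A z a + (t * C (fun _ => a) + (1 - t) * D (fun _ => a)) * z a ^ m := by
    intro z a
    rw [tApply_add (fun idx => A idx + t * C idx) (fun idx => (1 - t) * D idx),
      tApply_add A (fun idx => t * C idx), tApply_smul, tApply_smul,
      tApply_diag hC, tApply_diag hD]
    ring
  -- the key forward implication
  have hkey : ρt = t * ρC + (1 - t) * ρD →
      ∀ i : Fin n, D (fun _ => i) - C (fun _ => i) = ρD - ρC := by
    intro hE i
    have hwpos : ∀ a, 0 < u a ^ t * v a ^ (1 - t) := fun a =>
      mul_pos (Real.rpow_pos_of_pos (hu a) t) (Real.rpow_pos_of_pos (hv a) (1 - t))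
    -- per-index Hölder–AM-GM bound
    have hb1 : ∀ a, tApply A (fun b => u b ^ t * v b ^ (1 - t)) a
        ≤ ((ρC - C (fun _ => a)) ^ t * (ρD - D (fun _ => a)) ^ (1 - t))
            * (u a ^ t * v a ^ (1 - t)) ^ m := by
      intro a
      have h1 := tApply_holder hA hu hv ht0 ht1 a
      rw [hAu a, hAv a] at h1
      have h2 : ((ρC - C (fun _ => a)) * u a ^ m) ^ t
            * ((ρD - D (fun _ => a)) * v a ^ m) ^ (1 - t)
          = ((ρC - C (fun _ => a)) ^ t * (ρD - D (fun _ => a)) ^ (1 - t))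
            * (u a ^ t * v a ^ (1 - t)) ^ m := by
        rw [Real.mul_rpow (hpnn a) (pow_nonneg (hu a).le m),
          Real.mul_rpow (hqnn a) (pow_nonneg (hv a).le m),
          pow_rpow_comm (hu a).le, pow_rpow_comm (hv a).le, mul_pow]
        ring
      rw [h2] at h1
      exact h1
    have hbound : ∀ a, tApply (fun idx => A idx + t * C idx + (1 - t) * D idx)
        (fun b => u b ^ t * v b ^ (1 - t)) a
          ≤ (t * ρC + (1 - t) * ρD) * (u a ^ t * v a ^ (1 - t)) ^ m := by
      intro a
      rw [happt]
      have hwm : (0:ℝ) < (u a ^ t * v a ^ (1 - t)) ^ m := pow_pos (hwpos a) m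
      have h3 := amgm_le ht0 ht1 (hpnn a) (hqnn a)
      have h5 := mul_le_mul_of_nonneg_right h3 hwm.le
      calc tApply A (fun b => u b ^ t * v b ^ (1 - t)) a
            + (t * C (fun _ => a) + (1 - t) * D (fun _ => a)) * (u a ^ t * v a ^ (1 - t)) ^ m
          ≤ (t * (ρC - C (fun _ => a)) + (1 - t) * (ρD - D (fun _ => a)))
              * (u a ^ t * v a ^ (1 - t)) ^ m
            + (t * C (fun _ => a) + (1 - t) * D (fun _ => a))
              * (u a ^ t * v a ^ (1 - t)) ^ m := by
            linarith [(hb1 a).trans h5]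
        _ = (t * ρC + (1 - t) * ρD) * (u a ^ t * v a ^ (1 - t)) ^ m := by ring
    -- equality everywhere by the Collatz equality lemma
    have hall := eig_le_eq hBtnn hBtirr hx hwpos heqx
      (fun a => by rw [hE]; exact hbound a)
    -- squeeze at the index i
    have heqi := hall i
    rw [happt] at heqi
    have hwm : (0:ℝ) < (u i ^ t * v i ^ (1 - t)) ^ m := pow_pos (hwpos i) m
    have e : tApply A (fun b => u b ^ t * v b ^ (1 - t)) i
        = (t * (ρC - C (fun _ => i)) + (1 - t) * (ρD - D (fun _ => i)))
          * (u i ^ t * v i ^ (1 - t)) ^ m := by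
      rw [hE] at heqi
      linear_combination heqi
    have h3 := amgm_le ht0 ht1 (hpnn i) (hqnn i)
    have h5 := mul_le_mul_of_nonneg_right h3 hwm.le
    have hge : ((ρC - C (fun _ => i)) ^ t * (ρD - D (fun _ => i)) ^ (1 - t))
          * (u i ^ t * v i ^ (1 - t)) ^ m
        = (t * (ρC - C (fun _ => i)) + (1 - t) * (ρD - D (fun _ => i)))
          * (u i ^ t * v i ^ (1 - t)) ^ m := by
      refine le_antisymm h5 ?_
      rw [← e]
      exact hb1 i
    have hgeq := mul_right_cancel₀ hwm.ne' hge
    have := amgm_eq ht0 ht1 (hpnn i) (hqnn i) hgeq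
    linarith
  -- the second statement
  have hsecond : ρt = t * ρC + (1 - t) * ρD →
      ∀ idx, D idx - C idx = (ρD - ρC) * unitT m n idx := by
    intro hE idx
    by_cases hdiag : ∀ k, idx k = idx 0
    · have hidx : idx = fun _ => idx 0 := funext fun k => hdiag k
      rw [hidx, unitT_const, mul_one]
      exact hkey hE (idx 0)
    · rw [hD idx hdiag, hC idx hdiag]
      simp [unitT, hdiag]
  refine ⟨⟨fun hE => ⟨ρD - ρC, hsecond hE⟩, ?_⟩, hsecond⟩
  rintro ⟨cc, hcc⟩
  rcases le_or_gt 0 cc with hcc0 | hcc0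
  · have e1 : (fun idx => A idx + D idx)
        = (fun idx => (A idx + C idx) + cc * unitT m n idx) :=
      funext fun idx => by linear_combination hcc idx
    have e2 : (fun idx => A idx + t * C idx + (1 - t) * D idx)
        = (fun idx => (A idx + C idx) + ((1 - t) * cc) * unitT m n idx) :=
      funext fun idx => by linear_combination (1 - t) * hcc idx
    have hsD : ρD = ρC + cc := by
      rw [hρD, e1]
      rw [spec_shift hn hPF hCollatz hBCnn hBCirr hcc0]
    have hst : ρt = ρC + (1 - t) * cc := by
      rw [hρt, e2]
      rw [spec_shift hn hPF hCollatz hBCnn hBCirr (mul_nonneg ht1'.le hcc0)]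
    rw [hsD, hst]
    ring
  · have e1 : (fun idx => A idx + C idx)
        = (fun idx => (A idx + D idx) + (-cc) * unitT m n idx) :=
      funext fun idx => by linear_combination -(hcc idx)
    have e2 : (fun idx => A idx + t * C idx + (1 - t) * D idx)
        = (fun idx => (A idx + D idx) + (t * -cc) * unitT m n idx) :=
      funext fun idx => by linear_combination (-t) * hcc idx
    have hsC : ρC = ρD + -cc := by
      rw [hρC, e1]
      rw [spec_shift hn hPF hCollatz hBDnn hBDirr (by linarith)]
    have hst : ρt = ρD + t * -cc := by
      rw [hρt, e2]
      rw [spec_shift hn hPF hCollatz hBDnn hBDirr (by nlinarith)]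
    rw [hsC, hst]
    ring
end

section
/- Let A and B be symmetric essentially nonnegative tensors of even order m and dimension n, and t ∈ [0,1]. Assume that for any symmetric nonnegative tensor W, its spectral radius satisfies the variational formula ρ(W) = max{ W x^m : Σ_{i=1}^n x_i^m = 1, x ≥ 0 }, where W x^m = Σ_{i_1,...,i_m} W_{i_1...i_m} x_{i_1}⋯x_{i_m}, and that ρ(W + kI) = ρ(W) + k for k ≥ 0. Then λ(tA + (1−t)B) ≤ t·λ(A) + (1−t)·λ(B), i.e., the dominant eigenvalue is convex on the cone of symmetric essentially nonnegative tensors. -/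
open Finset

section Aux

variable {m n : ℕ}

lemma unitT_symm : TSymmetric (unitT m n) := by
  intro σ idx
  unfold unitT
  refine if_congr ?_ rfl rfl
  constructor
  · intro h k
    have h1 : ∀ k, idx k = idx (σ 0) := fun k => by
      have := h (σ.symm k); simpa using this
    rw [h1 k, h1 0]
  · intro h k
    simp only [Function.comp]
    rw [h (σ k), h (σ 0)]

lemma tForm_unit (x : Fin n → ℝ) :
    tForm (unitT m n) x = ∑ i, x i ^ (m + 1) := by
  unfold tForm unitT
  simp only [ite_mul, one_mul, zero_mul]
  rw [Finset.sum_ite, Finset.sum_const_zero, add_zero]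
  have himg : Finset.univ.filter (fun idx : Fin (m+1) → Fin n => ∀ k, idx k = idx 0)
      = Finset.univ.image (fun i : Fin n => (fun _ => i : Fin (m+1) → Fin n)) := by
    ext idx
    simp only [Finset.mem_filter, Finset.mem_univ, true_and, Finset.mem_image]
    constructor
    · intro h; exact ⟨idx 0, funext fun k => (h k).symm⟩
    · rintro ⟨i, rfl⟩; intro k; rfl
  rw [himg, Finset.sum_image (by intro a _ b _ h; exact congrFun h 0)]
  refine Finset.sum_congr rfl fun i _ => ?_
  rw [Finset.prod_const, Finset.card_univ, Fintype.card_fin]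

lemma shiftAlpha_ge_one (T : Tensor m n) : 1 ≤ shiftAlpha T := by
  unfold shiftAlpha
  have : (0:ℝ) ≤ ∑ i : Fin n, |T (fun _ => i)| :=
    Finset.sum_nonneg fun i _ => abs_nonneg _
  linarith

lemma shift_nonneg (T : Tensor m n) (hT : TEssNonneg T) (k : ℝ)
    (hk : shiftAlpha T ≤ k) : TNonneg (fun idx => T idx + k * unitT m n idx) := by
  intro idx
  by_cases h : ∀ k', idx k' = idx 0
  · have hidx : idx = fun _ => idx 0 := funext h
    have h1 : unitT m n idx = 1 := by unfold unitT; rw [if_pos h]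
    have h2 : |T (fun _ => idx 0)| ≤ ∑ i : Fin n, |T (fun _ => i)| :=
      Finset.single_le_sum (f := fun i => |T (fun _ => i)|) (fun i _ => abs_nonneg _)
        (Finset.mem_univ (idx 0))
    have h3 : shiftAlpha T = (∑ i : Fin n, |T (fun _ => i)|) + 1 := rfl
    have h4 : -T idx ≤ |T (fun _ => idx 0)| := by
      rw [hidx]; exact neg_le_abs _
    simp only [h1, mul_one]
    linarith
  · have h1 : unitT m n idx = 0 := by unfold unitT; rw [if_neg h]
    have := hT idx h
    simp only [h1, mul_zero]
    linarith

lemma shift_symm (T : Tensor m n) (hT : TSymmetric T) (k : ℝ) :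
    TSymmetric (fun idx => T idx + k * unitT m n idx) := by
  intro σ idx
  simp only
  rw [hT σ idx, unitT_symm σ idx]

end Aux

/-- convexity of the dominant eigenvalue on the cone of symmetric
essentially nonnegative tensors of even order. -/
theorem stmt13 {m n : ℕ} (hm : Even (m + 1)) (A B : Tensor m n)
    (hAs : TSymmetric A) (hAe : TEssNonneg A)
    (hBs : TSymmetric B) (hBe : TEssNonneg B)
    (hvar : ∀ W : Tensor m n, TNonneg W → TSymmetric W →
      specRad W = sSup {r : ℝ | ∃ x : Fin n → ℝ, (∀ i, 0 ≤ x i) ∧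
        (∑ i, (x i) ^ (m + 1)) = 1 ∧ tForm W x = r})
    (hshift : ∀ W : Tensor m n, TNonneg W → ∀ k : ℝ, 0 ≤ k →
      specRad (fun idx => W idx + k * unitT m n idx) = specRad W + k)
    (t : ℝ) (ht : t ∈ Set.Icc (0 : ℝ) 1) :
    domEig (t • A + (1 - t) • B) ≤ t * domEig A + (1 - t) * domEig B := by
  obtain ⟨ht0, ht1⟩ := ht
  set C : Tensor m n := t • A + (1 - t) • B with hC
  have hC_apply : ∀ idx, C idx = t * A idx + (1 - t) * B idx := by
    intro idx
    simp [hC, Pi.add_apply, Pi.smul_apply, smul_eq_mul]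
  -- dispose of the degenerate case n = 0
  rcases Nat.eq_zero_or_pos n with hn | hn
  · subst hn
    have hzero : ∀ T : Tensor m 0, domEig T = -1 := by
      intro T
      have hempty : {r : ℝ | ∃ lam : ℂ,
          IsEig (fun idx => T idx + shiftAlpha T * unitT m 0 idx) lam ∧ ‖lam‖ = r}
          = ∅ := by
        ext r
        simp only [Set.mem_setOf_eq, Set.mem_empty_iff_false, iff_false]
        rintro ⟨lam, ⟨x, hx0, -⟩, -⟩
        exact hx0 (funext fun i => i.elim0)
      have h1 : specRad (fun idx => T idx + shiftAlpha T * unitT m 0 idx) = 0 := by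
        unfold specRad; rw [hempty, Real.sSup_empty]
      have h2 : shiftAlpha T = 1 := by
        unfold shiftAlpha; simp
      unfold domEig
      rw [h1, h2]; norm_num
    rw [hzero, hzero, hzero]; linarith
  -- main case
  have hCs : TSymmetric C := by
    intro σ idx
    rw [hC_apply, hC_apply, hAs σ idx, hBs σ idx]
  have hCe : TEssNonneg C := by
    intro idx h
    rw [hC_apply]
    exact add_nonneg (mul_nonneg ht0 (hAe idx h)) (mul_nonneg (by linarith) (hBe idx h))
  set k : ℝ := shiftAlpha A + shiftAlpha B + shiftAlpha C with hkdef
  have hA1 := shiftAlpha_ge_one A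
  have hB1 := shiftAlpha_ge_one B
  have hC1 := shiftAlpha_ge_one C
  have hkA : shiftAlpha A ≤ k := by simp only [hkdef]; linarith
  have hkB : shiftAlpha B ≤ k := by simp only [hkdef]; linarith
  have hkC : shiftAlpha C ≤ k := by simp only [hkdef]; linarith
  -- domEig T = specRad (T + k I) - k for each of A, B, C
  have key : ∀ T : Tensor m n, TEssNonneg T → shiftAlpha T ≤ k →
      domEig T = specRad (fun idx => T idx + k * unitT m n idx) - k := by
    intro T hTe hTk
    have h1 : TNonneg (fun idx => T idx + shiftAlpha T * unitT m n idx) :=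
      shift_nonneg T hTe _ le_rfl
    have h2 := hshift _ h1 (k - shiftAlpha T) (by linarith)
    have h3 : (fun idx => (T idx + shiftAlpha T * unitT m n idx)
        + (k - shiftAlpha T) * unitT m n idx)
        = (fun idx => T idx + k * unitT m n idx) := funext fun idx => by ring
    rw [h3] at h2
    unfold domEig
    linarith
  -- feasible set data
  have hfeas : ∀ (x : Fin n → ℝ), (∀ i, 0 ≤ x i) → (∑ i, (x i) ^ (m + 1)) = 1 →
      ∀ i, x i ≤ 1 := by
    intro x hx0 hxs i
    have h1 : x i ^ (m + 1) ≤ 1 := by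
      rw [← hxs]
      exact Finset.single_le_sum (fun j _ => pow_nonneg (hx0 j) _) (Finset.mem_univ i)
    by_contra h
    push_neg at h
    have h2 : 1 < x i ^ (m + 1) := one_lt_pow₀ h (Nat.succ_ne_zero m)
    linarith
  have hbound : ∀ (W : Tensor m n) (x : Fin n → ℝ), (∀ i, 0 ≤ x i) →
      (∑ i, (x i) ^ (m + 1)) = 1 → tForm W x ≤ ∑ idx : Fin (m+1) → Fin n, |W idx| := by
    intro W x hx0 hxs
    unfold tForm
    refine Finset.sum_le_sum fun idx _ => ?_
    have hp0 : 0 ≤ ∏ kk, x (idx kk) := Finset.prod_nonneg fun kk _ => hx0 _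
    have hp1 : ∏ kk, x (idx kk) ≤ 1 :=
      Finset.prod_le_one (fun kk _ => hx0 _) (fun kk _ => hfeas x hx0 hxs _)
    calc W idx * ∏ kk, x (idx kk) ≤ |W idx| * ∏ kk, x (idx kk) :=
          mul_le_mul_of_nonneg_right (le_abs_self _) hp0
      _ ≤ |W idx| * 1 := mul_le_mul_of_nonneg_left hp1 (abs_nonneg _)
      _ = |W idx| := mul_one _
  -- a feasible point
  set x0 : Fin n → ℝ := fun i => if i = ⟨0, hn⟩ then 1 else 0 with hx0def
  have hx0nn : ∀ i, 0 ≤ x0 i := by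
    intro i; simp only [hx0def]; split <;> norm_num
  have hx0sum : (∑ i, (x0 i) ^ (m + 1)) = 1 := by
    have hpt : ∀ i, x0 i ^ (m + 1) = if i = ⟨0, hn⟩ then 1 else 0 := by
      intro i
      simp only [hx0def]
      split <;> simp [zero_pow (Nat.succ_ne_zero m)]
    rw [Finset.sum_congr rfl fun i _ => hpt i, Finset.sum_ite_eq' Finset.univ]
    simp
  -- spectral radii via the variational formula
  have hSRle : ∀ T : Tensor m n, TEssNonneg T → TSymmetric T → shiftAlpha T ≤ k →
      ∀ (x : Fin n → ℝ), (∀ i, 0 ≤ x i) → (∑ i, (x i) ^ (m + 1)) = 1 →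
      tForm (fun idx => T idx + k * unitT m n idx) x ≤
        specRad (fun idx => T idx + k * unitT m n idx) := by
    intro T hTe hTs hTk x hx hxs
    have hnn : TNonneg (fun idx => T idx + k * unitT m n idx) := shift_nonneg T hTe k hTk
    have hsym : TSymmetric (fun idx => T idx + k * unitT m n idx) := shift_symm T hTs k
    rw [hvar _ hnn hsym]
    refine le_csSup ⟨∑ idx : Fin (m+1) → Fin n, |(T idx + k * unitT m n idx)|, ?_⟩ ?_
    · rintro r ⟨y, hy0, hys, rfl⟩
      exact hbound _ y hy0 hys
    · exact ⟨x, hx, hxs, rfl⟩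
  -- the main inequality at the level of shifted spectral radii
  have hmain : specRad (fun idx => C idx + k * unitT m n idx) ≤
      t * specRad (fun idx => A idx + k * unitT m n idx) +
      (1 - t) * specRad (fun idx => B idx + k * unitT m n idx) := by
    have hnn : TNonneg (fun idx => C idx + k * unitT m n idx) := shift_nonneg C hCe k hkC
    have hsym : TSymmetric (fun idx => C idx + k * unitT m n idx) := shift_symm C hCs k
    rw [hvar _ hnn hsym]
    refine csSup_le ⟨tForm (fun idx => C idx + k * unitT m n idx) x0,
      x0, hx0nn, hx0sum, rfl⟩ ?_
    rintro r ⟨x, hx, hxs, rfl⟩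
    have hlin : tForm (fun idx => C idx + k * unitT m n idx) x
        = t * tForm (fun idx => A idx + k * unitT m n idx) x
        + (1 - t) * tForm (fun idx => B idx + k * unitT m n idx) x := by
      unfold tForm
      rw [Finset.mul_sum, Finset.mul_sum, ← Finset.sum_add_distrib]
      refine Finset.sum_congr rfl fun idx _ => ?_
      simp only [hC_apply]; ring
    rw [hlin]
    have h1 := hSRle A hAe hAs hkA x hx hxs
    have h2 := hSRle B hBe hBs hkB x hx hxs
    have := mul_le_mul_of_nonneg_left h1 ht0
    have := mul_le_mul_of_nonneg_left h2 (by linarith : (0:ℝ) ≤ 1 - t)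
    linarith
  rw [key A hAe hkA, key B hBe hkB, key C hCe hkC]
  linarith
end

section
/- Let A and B be nonnegative tensors of order m and dimension n, and for t ∈ [0,1] define the Hadamard-type interpolation G(t) with entries G(t)_{i_1...i_m} = A_{i_1...i_m}^{1−t} B_{i_1...i_m}^{t} (with the convention 0^s = 0 for s ∈ [0,1], and 0^0 = 0 when both entries are zero if either is zero). Suppose A and B are irreducible with positive Perron eigenvectors x, y: A x^{m-1} = ρ(A) x^{[m-1]}, B y^{m-1} = ρ(B) y^{[m-1]}, x, y > 0. Then for the vector z with z_i = x_i^{1−t} y_i^{t}, componentwise G(t) z^{m-1} ≤ ρ(A)^{1−t} ρ(B)^{t} z^{[m-1]}. -/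
open Finset

lemma holder_two {ι : Type*} (s : Finset ι) (f g : ι → ℝ)
    (hf : ∀ i ∈ s, 0 ≤ f i) (hg : ∀ i ∈ s, 0 ≤ g i)
    {t : ℝ} (ht : t ∈ Set.Icc (0:ℝ) 1) :
    ∑ i ∈ s, f i ^ (1 - t) * g i ^ t ≤ (∑ i ∈ s, f i) ^ (1 - t) * (∑ i ∈ s, g i) ^ t := by
  obtain ⟨ht0, ht1⟩ := ht
  rcases eq_or_lt_of_le ht0 with h0 | h0
  · simp [← h0]
  rcases eq_or_lt_of_le ht1 with h1 | h1
  · simp [h1]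
  have hpq : Real.HolderConjugate (1/(1-t)) (1/t) := by
    constructor
    · rw [one_div, one_div, inv_inv, inv_inv, inv_one]; ring
    · exact div_pos one_pos (by linarith)
    · exact div_pos one_pos h0
  have h := Real.inner_le_Lp_mul_Lq_of_nonneg s hpq
    (f := fun i => f i ^ (1 - t)) (g := fun i => g i ^ t)
    (fun i hi => Real.rpow_nonneg (hf i hi) _)
    (fun i hi => Real.rpow_nonneg (hg i hi) _)
  simp only [one_div_one_div] at h
  calc ∑ i ∈ s, f i ^ (1 - t) * g i ^ t ≤ _ := h
    _ = (∑ i ∈ s, f i) ^ (1 - t) * (∑ i ∈ s, g i) ^ t := by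
        congr 2
        · apply Finset.sum_congr rfl
          intro i hi
          rw [← Real.rpow_mul (hf i hi), mul_one_div_cancel (by linarith), Real.rpow_one]
        · apply Finset.sum_congr rfl
          intro i hi
          rw [← Real.rpow_mul (hg i hi), mul_one_div_cancel (by linarith), Real.rpow_one]

/-- Hölder step of Kingman's theorem for tensors. -/
theorem stmt14 {m n : ℕ} (A B : Tensor m n)
    (hA : TNonneg A) (hB : TNonneg B)
    (hirrA : TIrreducible A) (hirrB : TIrreducible B)
    (x y : Fin n → ℝ) (hx : ∀ i, 0 < x i) (hy : ∀ i, 0 < y i)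
    (hAx : ∀ i, tApply A x i = specRad A * (x i) ^ m)
    (hBy : ∀ i, tApply B y i = specRad B * (y i) ^ m)
    (t : ℝ) (ht : t ∈ Set.Icc (0 : ℝ) 1)
    (G : Tensor m n) (hG : ∀ idx, G idx = A idx ^ (1 - t) * B idx ^ t)
    (z : Fin n → ℝ) (hz : ∀ i, z i = x i ^ (1 - t) * y i ^ t) :
    ∀ i, tApply G z i ≤ specRad A ^ (1 - t) * specRad B ^ t * (z i) ^ m := by
  intro i
  obtain ⟨ht0, ht1⟩ := ht
  -- abbreviations
  set a : (Fin m → Fin n) → ℝ := fun j => A (Fin.cons i j) * ∏ k, x (j k) with ha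
  set b : (Fin m → Fin n) → ℝ := fun j => B (Fin.cons i j) * ∏ k, y (j k) with hb
  have hprodx : ∀ j : Fin m → Fin n, (0:ℝ) ≤ ∏ k, x (j k) :=
    fun j => Finset.prod_nonneg fun k _ => (hx _).le
  have hprody : ∀ j : Fin m → Fin n, (0:ℝ) ≤ ∏ k, y (j k) :=
    fun j => Finset.prod_nonneg fun k _ => (hy _).le
  have ha0 : ∀ j, 0 ≤ a j := fun j => mul_nonneg (hA _) (hprodx j)
  have hb0 : ∀ j, 0 ≤ b j := fun j => mul_nonneg (hB _) (hprody j)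
  -- each term of G z equals a^(1-t) * b^t
  have hterm : ∀ j : Fin m → Fin n,
      G (Fin.cons i j) * ∏ k, z (j k) = a j ^ (1 - t) * b j ^ t := by
    intro j
    have hzz : ∏ k, z (j k) = (∏ k, x (j k)) ^ (1 - t) * (∏ k, y (j k)) ^ t := by
      calc ∏ k, z (j k) = ∏ k, (x (j k) ^ (1 - t) * y (j k) ^ t) := by
            exact Finset.prod_congr rfl fun k _ => hz (j k)
        _ = (∏ k, x (j k) ^ (1 - t)) * ∏ k, y (j k) ^ t := Finset.prod_mul_distrib
        _ = (∏ k, x (j k)) ^ (1 - t) * (∏ k, y (j k)) ^ t := by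
            rw [← Real.finset_prod_rpow _ _ (fun k _ => (hx _).le),
              ← Real.finset_prod_rpow _ _ (fun k _ => (hy _).le)]
    rw [hG, hzz, ha, hb]
    rw [Real.mul_rpow (hA _) (hprodx j), Real.mul_rpow (hB _) (hprody j)]
    ring
  -- sum
  have hsum : tApply G z i = ∑ j : Fin m → Fin n, a j ^ (1 - t) * b j ^ t := by
    unfold tApply; exact Finset.sum_congr rfl fun j _ => hterm j
  have hAi : ∑ j : Fin m → Fin n, a j = specRad A * x i ^ m := by
    rw [← hAx i]; rfl
  have hBi : ∑ j : Fin m → Fin n, b j = specRad B * y i ^ m := by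
    rw [← hBy i]; rfl
  have hρA : 0 ≤ specRad A := by
    have h1 : 0 ≤ specRad A * x i ^ m := by
      rw [← hAi]; exact Finset.sum_nonneg fun j _ => ha0 j
    have h2 : 0 < x i ^ m := pow_pos (hx i) m
    nlinarith
  have hρB : 0 ≤ specRad B := by
    have h1 : 0 ≤ specRad B * y i ^ m := by
      rw [← hBi]; exact Finset.sum_nonneg fun j _ => hb0 j
    have h2 : 0 < y i ^ m := pow_pos (hy i) m
    nlinarith
  have hH := holder_two Finset.univ a b (fun j _ => ha0 j) (fun j _ => hb0 j)
    (t := t) ⟨ht0, ht1⟩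
  rw [hsum]
  refine hH.trans (le_of_eq ?_)
  rw [hAi, hBi, Real.mul_rpow hρA (pow_pos (hx i) m).le,
    Real.mul_rpow hρB (pow_pos (hy i) m).le]
  have hxm : (x i ^ m : ℝ) ^ (1 - t) = (x i ^ (1 - t)) ^ m := by
    rw [← Real.rpow_natCast (x i) m, ← Real.rpow_mul (hx i).le,
      ← Real.rpow_natCast (x i ^ (1 - t)) m, ← Real.rpow_mul (hx i).le, mul_comm]
  have hym : (y i ^ m : ℝ) ^ t = (y i ^ t) ^ m := by
    rw [← Real.rpow_natCast (y i) m, ← Real.rpow_mul (hy i).le,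
      ← Real.rpow_natCast (y i ^ t) m, ← Real.rpow_mul (hy i).le, mul_comm]
  rw [hxm, hym, hz i, mul_pow]
  ring
end

section
/- Let F(t), t ∈ [0,1], be a family of m-order n-dimensional irreducible nonnegative tensors such that each entry function F_{i_1...i_m}(t) is either identically zero or positive and log convex in t. Let A = F(0), B = F(1), and G(t) be the tensor with entries A_{i_1...i_m}^{1−t} B_{i_1...i_m}^{t}. Then ρ(F(t)) ≤ ρ(G(t)) ≤ ρ(A)^{1−t} ρ(B)^{t} for all t ∈ [0,1]; in particular ρ(F(t)) is a log convex function of t. -/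
open Finset

lemma hoelder_sum {ι : Type*} [Fintype ι] (f g : ι → ℝ) (hf : ∀ i, 0 ≤ f i)
    (hg : ∀ i, 0 ≤ g i) {a b : ℝ} (ha : 0 ≤ a) (hb : 0 ≤ b) (hab : a + b = 1) :
    ∑ i, f i ^ a * g i ^ b ≤ (∑ i, f i) ^ a * (∑ i, g i) ^ b := by
  rcases ha.eq_or_lt with ha0 | ha
  · have hb1 : b = 1 := by linarith
    simp [← ha0, hb1, Real.rpow_one]
  rcases hb.eq_or_lt with hb0 | hb
  · have ha1 : a = 1 := by linarith
    simp [← hb0, ha1, Real.rpow_one]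
  set F := ∑ i, f i with hF
  set G := ∑ i, g i with hG
  have hFnn : 0 ≤ F := Finset.sum_nonneg fun i _ => hf i
  have hGnn : 0 ≤ G := Finset.sum_nonneg fun i _ => hg i
  rcases hFnn.eq_or_lt with hF0 | hFpos
  · have hall : ∀ i ∈ Finset.univ, f i = 0 :=
      (Finset.sum_eq_zero_iff_of_nonneg (fun i _ => hf i)).1 hF0.symm
    have : ∑ i, f i ^ a * g i ^ b = 0 := Finset.sum_eq_zero fun i hi => by
      rw [hall i hi, Real.zero_rpow ha.ne', zero_mul]
    rw [this]
    exact mul_nonneg (Real.rpow_nonneg hFnn a) (Real.rpow_nonneg hGnn b)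
  rcases hGnn.eq_or_lt with hG0 | hGpos
  · have hall : ∀ i ∈ Finset.univ, g i = 0 :=
      (Finset.sum_eq_zero_iff_of_nonneg (fun i _ => hg i)).1 hG0.symm
    have : ∑ i, f i ^ a * g i ^ b = 0 := Finset.sum_eq_zero fun i hi => by
      rw [hall i hi, Real.zero_rpow hb.ne', mul_zero]
    rw [this]
    exact mul_nonneg (Real.rpow_nonneg hFnn a) (Real.rpow_nonneg hGnn b)
  have hFa : (0:ℝ) < F ^ a := Real.rpow_pos_of_pos hFpos a
  have hGb : (0:ℝ) < G ^ b := Real.rpow_pos_of_pos hGpos b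
  have key : ∑ i, (f i / F) ^ a * (g i / G) ^ b ≤ 1 := by
    calc ∑ i, (f i / F) ^ a * (g i / G) ^ b
        ≤ ∑ i, (a * (f i / F) + b * (g i / G)) :=
          Finset.sum_le_sum fun i _ =>
            Real.geom_mean_le_arith_mean2_weighted ha.le hb.le
              (div_nonneg (hf i) hFnn) (div_nonneg (hg i) hGnn) hab
      _ = a * (F / F) + b * (G / G) := by
          rw [Finset.sum_add_distrib, ← Finset.mul_sum, ← Finset.mul_sum,
            ← Finset.sum_div, ← Finset.sum_div]
      _ = 1 := by rw [div_self hFpos.ne', div_self hGpos.ne']; linarith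
  have heq : ∑ i, f i ^ a * g i ^ b
      = (∑ i, (f i / F) ^ a * (g i / G) ^ b) * (F ^ a * G ^ b) := by
    rw [Finset.sum_mul]
    refine Finset.sum_congr rfl fun i _ => ?_
    rw [Real.div_rpow (hf i) hFnn, Real.div_rpow (hg i) hGnn]
    field_simp
  rw [heq]
  calc (∑ i, (f i / F) ^ a * (g i / G) ^ b) * (F ^ a * G ^ b)
      ≤ 1 * (F ^ a * G ^ b) :=
        mul_le_mul_of_nonneg_right key (by positivity)
    _ = F ^ a * G ^ b := one_mul _


lemma specBound {m n : ℕ} (P Q : Tensor m n) (hPn : TNonneg P) (hQn : TNonneg Q)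
    (u v : Fin n → ℝ) (hu : ∀ i, 0 < u i) (hv : ∀ i, 0 < v i)
    (hPu : ∀ i, tApply P u i = specRad P * u i ^ m)
    (hQv : ∀ i, tApply Q v i = specRad Q * v i ^ m)
    (hρP : 0 ≤ specRad P) (hρQ : 0 ≤ specRad Q)
    {a b : ℝ} (ha : 0 ≤ a) (hb : 0 ≤ b) (hab : a + b = 1)
    (hub : ∀ (T : Tensor m n), TNonneg T → ∀ (β : ℝ) (z : Fin n → ℝ),
      (∀ i, 0 < z i) → (∀ i, tApply T z i ≤ β * (z i) ^ m) → specRad T ≤ β) :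
    specRad (fun idx => P idx ^ a * Q idx ^ b) ≤ specRad P ^ a * specRad Q ^ b := by
  set H : Tensor m n := fun idx => P idx ^ a * Q idx ^ b with hH
  have hHn : TNonneg H := fun idx =>
    mul_nonneg (Real.rpow_nonneg (hPn idx) a) (Real.rpow_nonneg (hQn idx) b)
  set z : Fin n → ℝ := fun i => u i ^ a * v i ^ b with hz
  have hzpos : ∀ i, 0 < z i := fun i =>
    mul_pos (Real.rpow_pos_of_pos (hu i) a) (Real.rpow_pos_of_pos (hv i) b)
  refine hub H hHn _ z hzpos fun i => ?_
  have step1 : tApply H z i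
      = ∑ j : Fin m → Fin n, (P (Fin.cons i j) * ∏ k, u (j k)) ^ a
          * (Q (Fin.cons i j) * ∏ k, v (j k)) ^ b := by
    refine Finset.sum_congr rfl fun j _ => ?_
    have h1 : ∏ k, z (j k) = (∏ k, u (j k)) ^ a * (∏ k, v (j k)) ^ b := by
      rw [hz]
      simp only
      rw [Finset.prod_mul_distrib,
        Real.finset_prod_rpow _ _ (fun k _ => (hu _).le) a,
        Real.finset_prod_rpow _ _ (fun k _ => (hv _).le) b]
    rw [h1, Real.mul_rpow (hPn _) (Finset.prod_nonneg fun k _ => (hu _).le),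
      Real.mul_rpow (hQn _) (Finset.prod_nonneg fun k _ => (hv _).le)]
    ring
  have step2 : tApply H z i ≤ (tApply P u i) ^ a * (tApply Q v i) ^ b := by
    rw [step1]
    exact hoelder_sum _ _
      (fun j => mul_nonneg (hPn _) (Finset.prod_nonneg fun k _ => (hu _).le))
      (fun j => mul_nonneg (hQn _) (Finset.prod_nonneg fun k _ => (hv _).le))
      ha hb hab
  refine step2.trans (le_of_eq ?_)
  rw [hPu i, hQv i, Real.mul_rpow hρP (pow_nonneg (hu i).le m),
    Real.mul_rpow hρQ (pow_nonneg (hv i).le m)]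
  have hum : (u i ^ m : ℝ) ^ a = (u i ^ a) ^ m := by
    rw [← Real.rpow_natCast (u i) m, ← Real.rpow_natCast (u i ^ a) m,
      ← Real.rpow_mul (hu i).le, ← Real.rpow_mul (hu i).le, mul_comm]
  have hvm : (v i ^ m : ℝ) ^ b = (v i ^ b) ^ m := by
    rw [← Real.rpow_natCast (v i) m, ← Real.rpow_natCast (v i ^ b) m,
      ← Real.rpow_mul (hv i).le, ← Real.rpow_mul (hv i).le, mul_comm]
  rw [hum, hvm, hz]
  simp only
  rw [mul_pow]
  ring

lemma mem01_0 : (0:ℝ) ∈ Set.Icc (0:ℝ) 1 := ⟨le_refl 0, zero_le_one⟩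
lemma mem01_1 : (1:ℝ) ∈ Set.Icc (0:ℝ) 1 := ⟨zero_le_one, le_refl 1⟩

/-- Kingman's theorem for tensors: log convexity of the
spectral radius. -/
theorem stmt15 {m n : ℕ} (F : ℝ → Tensor m n)
    (hFnn : ∀ t ∈ Set.Icc (0 : ℝ) 1, TNonneg (F t))
    (hFirr : ∀ t ∈ Set.Icc (0 : ℝ) 1, TIrreducible (F t))
    (hent : ∀ idx : Fin (m + 1) → Fin n,
      (∀ t ∈ Set.Icc (0 : ℝ) 1, F t idx = 0) ∨
      ((∀ t ∈ Set.Icc (0 : ℝ) 1, 0 < F t idx) ∧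
        ConvexOn ℝ (Set.Icc (0 : ℝ) 1) (fun t => Real.log (F t idx))))
    (A B : Tensor m n) (hA : A = F 0) (hB : B = F 1)
    (G : ℝ → Tensor m n) (hG : ∀ t idx, G t idx = A idx ^ (1 - t) * B idx ^ t)
    (hmono : ∀ T T' : Tensor m n, TNonneg T → TNonneg T' →
      (∀ idx, T idx ≤ T' idx) → specRad T ≤ specRad T')
    (hPF : ∀ T : Tensor m n, TNonneg T → TIrreducible T →
      ∃ u : Fin n → ℝ, (∀ i, 0 < u i) ∧ ∀ i, tApply T u i = specRad T * (u i) ^ m)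
    (hub : ∀ (T : Tensor m n), TNonneg T → ∀ (β : ℝ) (z : Fin n → ℝ),
      (∀ i, 0 < z i) → (∀ i, tApply T z i ≤ β * (z i) ^ m) → specRad T ≤ β) :
    (∀ t ∈ Set.Icc (0 : ℝ) 1,
      specRad (F t) ≤ specRad (G t) ∧
      specRad (G t) ≤ specRad A ^ (1 - t) * specRad B ^ t) ∧
    ConvexOn ℝ (Set.Icc (0 : ℝ) 1) (fun t => Real.log (specRad (F t))) := by
  subst hA hB
  -- dispatch n = 0 (hub is contradictory there)
  rcases Nat.eq_zero_or_pos n with hn | hn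
  · exfalso
    subst hn
    have := hub (F 0) (hFnn 0 mem01_0) (specRad (F 0) - 1)
      (fun i => i.elim0) (fun i => i.elim0) (fun i => i.elim0)
    linarith
  have i0 : Fin n := ⟨0, hn⟩
  -- nonnegativity of spectral radii
  have hρnn : ∀ t ∈ Set.Icc (0:ℝ) 1, 0 ≤ specRad (F t) := by
    intro t ht
    obtain ⟨u, hu, hE⟩ := hPF (F t) (hFnn t ht) (hFirr t ht)
    have h1 : 0 ≤ tApply (F t) u i0 :=
      Finset.sum_nonneg fun j _ =>
        mul_nonneg (hFnn t ht _) (Finset.prod_nonneg fun k _ => (hu _).le)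
    rw [hE i0] at h1
    have h2 : (0:ℝ) < u i0 ^ m := pow_pos (hu i0) m
    by_contra h
    push_neg at h
    nlinarith
  -- entrywise comparison
  have hle : ∀ x ∈ Set.Icc (0:ℝ) 1, ∀ y ∈ Set.Icc (0:ℝ) 1, ∀ a b : ℝ,
      0 ≤ a → 0 ≤ b → a + b = 1 → ∀ idx,
      F (a * x + b * y) idx ≤ F x idx ^ a * F y idx ^ b := by
    intro x hx y hy a b ha hb hab idx
    have hc : a * x + b * y ∈ Set.Icc (0:ℝ) 1 := by
      have := (convex_Icc (0:ℝ) 1) hx hy ha hb hab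
      simpa using this
    rcases hent idx with h0 | ⟨hp, hcv⟩
    · rw [h0 _ hc]
      exact mul_nonneg (Real.rpow_nonneg (le_of_eq (h0 _ hx).symm) a)
        (Real.rpow_nonneg (le_of_eq (h0 _ hy).symm) b)
    · have hlog := hcv.2 hx hy ha hb hab
      simp only [smul_eq_mul] at hlog
      have h1 : F (a * x + b * y) idx = Real.exp (Real.log (F (a * x + b * y) idx)) :=
        (Real.exp_log (hp _ hc)).symm
      rw [h1, Real.rpow_def_of_pos (hp _ hx), Real.rpow_def_of_pos (hp _ hy),
        ← Real.exp_add]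
      exact Real.exp_le_exp.2 (by linarith [hlog])
  -- G t as rpow tensor
  have hGeq : ∀ t : ℝ, G t = fun idx => F 0 idx ^ (1 - t) * F 1 idx ^ t :=
    fun t => funext fun idx => hG t idx
  have hGnn : ∀ t : ℝ, TNonneg (G t) := by
    intro t idx
    rw [hG t idx]
    exact mul_nonneg (Real.rpow_nonneg (hFnn 0 mem01_0 idx) _)
      (Real.rpow_nonneg (hFnn 1 mem01_1 idx) _)
  constructor
  · intro t ht
    have h1t : (0:ℝ) ≤ 1 - t := by linarith [ht.2]
    have hsum : (1 - t) + t = 1 := by ring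
    constructor
    · refine hmono _ _ (hFnn t ht) (hGnn t) fun idx => ?_
      have := hle 0 mem01_0 1 mem01_1 (1 - t) t h1t ht.1 hsum idx
      have harg : (1 - t) * 0 + t * 1 = t := by ring
      rw [harg] at this
      rw [hG t idx]
      exact this
    · obtain ⟨u, hu, hE⟩ := hPF (F 0) (hFnn 0 mem01_0) (hFirr 0 mem01_0)
      obtain ⟨v, hv, hE'⟩ := hPF (F 1) (hFnn 1 mem01_1) (hFirr 1 mem01_1)
      rw [hGeq t]
      exact specBound (F 0) (F 1) (hFnn 0 mem01_0) (hFnn 1 mem01_1) u v hu hv hE hE'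
        (hρnn 0 mem01_0) (hρnn 1 mem01_1) h1t ht.1 hsum hub
  -- log convexity
  · -- the key inequality
    have hkey : ∀ x ∈ Set.Icc (0:ℝ) 1, ∀ y ∈ Set.Icc (0:ℝ) 1, ∀ a b : ℝ,
        0 ≤ a → 0 ≤ b → a + b = 1 →
        specRad (F (a * x + b * y)) ≤ specRad (F x) ^ a * specRad (F y) ^ b := by
      intro x hx y hy a b ha hb hab
      have hc : a * x + b * y ∈ Set.Icc (0:ℝ) 1 := by
        have := (convex_Icc (0:ℝ) 1) hx hy ha hb hab
        simpa using this
      set H : Tensor m n := fun idx => F x idx ^ a * F y idx ^ b with hH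
      have hHn : TNonneg H := fun idx =>
        mul_nonneg (Real.rpow_nonneg (hFnn x hx idx) a)
          (Real.rpow_nonneg (hFnn y hy idx) b)
      have step1 : specRad (F (a * x + b * y)) ≤ specRad H :=
        hmono _ _ (hFnn _ hc) hHn (hle x hx y hy a b ha hb hab)
      obtain ⟨u, hu, hE⟩ := hPF (F x) (hFnn x hx) (hFirr x hx)
      obtain ⟨v, hv, hE'⟩ := hPF (F y) (hFnn y hy) (hFirr y hy)
      exact step1.trans (specBound (F x) (F y) (hFnn x hx) (hFnn y hy) u v hu hv hE hE'
        (hρnn x hx) (hρnn y hy) ha hb hab hub)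
    by_cases hzero : ∀ idx : Fin (m + 1) → Fin n, ∀ t ∈ Set.Icc (0:ℝ) 1, F t idx = 0
    · -- F is identically zero on [0,1]; specRad is 0 there
      have hρ0 : ∀ t ∈ Set.Icc (0:ℝ) 1, specRad (F t) = 0 := by
        intro t ht
        refine le_antisymm ?_ (hρnn t ht)
        refine hub (F t) (hFnn t ht) 0 (fun _ => 1) (fun _ => one_pos) fun i => ?_
        have : tApply (F t) (fun _ => 1) i = 0 :=
          Finset.sum_eq_zero fun j _ => by rw [hzero _ t ht, zero_mul]
        rw [this, zero_mul]
      refine ⟨convex_Icc 0 1, ?_⟩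
      intro x hx y hy a b ha hb hab
      have hc : a • x + b • y ∈ Set.Icc (0:ℝ) 1 := (convex_Icc (0:ℝ) 1) hx hy ha hb hab
      simp only [smul_eq_mul]
      rw [hρ0 _ (by simpa using hc), hρ0 _ hx, hρ0 _ hy, Real.log_zero]
      simp
    · -- some entry is positive throughout; specRad is positive on [0,1]
      push_neg at hzero
      obtain ⟨idx0, t0, ht0, hne⟩ := hzero
      have hpos : ∀ t ∈ Set.Icc (0:ℝ) 1, 0 < F t idx0 := by
        rcases hent idx0 with h0 | ⟨hp, _⟩
        · exact absurd (h0 t0 ht0) hne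
        · exact hp
      have hρpos : ∀ t ∈ Set.Icc (0:ℝ) 1, 0 < specRad (F t) := by
        intro t ht
        obtain ⟨u, hu, hE⟩ := hPF (F t) (hFnn t ht) (hFirr t ht)
        have hterm : 0 < F t (Fin.cons (idx0 0) (Fin.tail idx0)) * ∏ k, u (Fin.tail idx0 k) := by
          rw [Fin.cons_self_tail]
          exact mul_pos (hpos t ht) (Finset.prod_pos fun k _ => hu _)
        have hsum : 0 < tApply (F t) u (idx0 0) := by
          have h1 : F t (Fin.cons (idx0 0) (Fin.tail idx0)) * ∏ k, u (Fin.tail idx0 k)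
              ≤ tApply (F t) u (idx0 0) :=
            Finset.single_le_sum (f := fun j => F t (Fin.cons (idx0 0) j) * ∏ k, u (j k))
              (fun j _ => mul_nonneg (hFnn t ht _)
                (Finset.prod_nonneg fun k _ => (hu _).le))
              (Finset.mem_univ (Fin.tail idx0))
          linarith
        rw [hE] at hsum
        have h2 : (0:ℝ) < u (idx0 0) ^ m := pow_pos (hu _) m
        by_contra h
        push_neg at h
        nlinarith
      refine ⟨convex_Icc 0 1, ?_⟩
      intro x hx y hy a b ha hb hab
      simp only [smul_eq_mul]
      have hc : a * x + b * y ∈ Set.Icc (0:ℝ) 1 := by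
        have := (convex_Icc (0:ℝ) 1) hx hy ha hb hab
        simpa using this
      have h1 := hkey x hx y hy a b ha hb hab
      have hx' := hρpos x hx
      have hy' := hρpos y hy
      calc Real.log (specRad (F (a * x + b * y)))
          ≤ Real.log (specRad (F x) ^ a * specRad (F y) ^ b) :=
            Real.log_le_log (hρpos _ hc) h1
        _ = a * Real.log (specRad (F x)) + b * Real.log (specRad (F y)) := by
            rw [Real.log_mul (Real.rpow_pos_of_pos hx' a).ne'
              (Real.rpow_pos_of_pos hy' b).ne',
              Real.log_rpow hx', Real.log_rpow hy']
end

section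
/- Let A be a nonnegative tensor of order m and dimension n and x a strictly positive vector in R^n. Assume ρ(A) is an eigenvalue of A with a nonzero nonnegative eigenvector u (Perron-Frobenius for nonnegative tensors). Then ρ(A) ≤ max_{1≤i≤n} (A x^{m-1})_i / x_i^{m-1}. -/
open Finset

/-- Collatz upper bound for the spectral radius. -/
theorem stmt18 {m n : ℕ} (hn : 0 < n) (A : Tensor m n) (hA : TNonneg A)
    (x : Fin n → ℝ) (hx : ∀ i, 0 < x i)
    (u : Fin n → ℝ) (hu0 : u ≠ 0) (hunn : ∀ i, 0 ≤ u i)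
    (hue : ∀ i, tApply A u i = specRad A * (u i) ^ m) :
    specRad A ≤ Finset.univ.sup' (Finset.univ_nonempty_iff.mpr ⟨⟨0, hn⟩⟩)
      (fun i => tApply A x i / (x i) ^ m) := by
  have hne : (Finset.univ : Finset (Fin n)).Nonempty := Finset.univ_nonempty_iff.mpr ⟨⟨0, hn⟩⟩
  obtain ⟨i, -, hi⟩ := Finset.exists_max_image Finset.univ (fun j => u j / x j) hne
  set t := u i / x i with ht
  obtain ⟨j0, hj0⟩ : ∃ j, 0 < u j := by
    by_contra h
    push_neg at h
    exact hu0 (funext fun j => le_antisymm (h j) (hunn j))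
  have ht0 : 0 < t := lt_of_lt_of_le (div_pos hj0 (hx j0)) (hi j0 (mem_univ j0))
  have hub : ∀ j, u j ≤ t * x j := fun j => by
    have h1 := hi j (mem_univ j)
    have h2 : u j / x j * x j ≤ t * x j := mul_le_mul_of_nonneg_right h1 (hx j).le
    rwa [div_mul_cancel₀ _ (hx j).ne'] at h2
  have hui : u i = t * x i := by rw [ht, div_mul_cancel₀ _ (hx i).ne']
  have key : tApply A u i ≤ t ^ m * tApply A x i := by
    rw [tApply, tApply, Finset.mul_sum]
    apply Finset.sum_le_sum
    intro j _
    have hp : ∏ k, u (j k) ≤ ∏ k, t * x (j k) :=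
      Finset.prod_le_prod (fun k _ => hunn _) (fun k _ => hub _)
    calc A (Fin.cons i j) * ∏ k, u (j k)
        ≤ A (Fin.cons i j) * ∏ k, t * x (j k) :=
          mul_le_mul_of_nonneg_left hp (hA _)
      _ = t ^ m * (A (Fin.cons i j) * ∏ k, x (j k)) := by
          rw [Finset.prod_mul_distrib, Finset.prod_const, Finset.card_univ,
            Fintype.card_fin]; ring
  rw [hue i, hui, mul_pow] at key
  have htm : 0 < t ^ m := pow_pos ht0 m
  have h3 : specRad A * (x i) ^ m ≤ tApply A x i := by
    nlinarith [key, htm]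
  have hxm : 0 < (x i) ^ m := pow_pos (hx i) m
  have h4 : specRad A ≤ tApply A x i / (x i) ^ m := (le_div_iff₀ hxm).mpr h3
  exact h4.trans (Finset.le_sup' (fun i => tApply A x i / x i ^ m) (mem_univ i))
end
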